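/- arXiv:2107.14581 — 9 statements merged into one kernel-verified Lean document; each statement's English description precedes it below -/
import Mathlib

section
/- Let C be a symmetric monoidal category equipped with an insertion structure such that every insertion ε_{A,B} is completely injective, C has basic manipulations, and each ε_{I,A} : (I ⇒ A) ⊗ I ⟶ A is an isomorphism. Then C is a closed symmetric monoidal category: for every morphism f : C ⊗ A ⟶ B there exists a unique morphism f̄ : C ⟶ (A ⇒ B) with (f̄ ⊗ id_A) ≫ ε_{A,B} = f. -/
open CategoryTheory MonoidalCategory

universe v u

/-- An insertion structure on a symmetric monoidal category: to each pair of objects `A, B` it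
assigns an object `hom A B` (written `A ⇒ B`), to each morphism `f : A ⟶ B` a state
`static f : I ⟶ (A ⇒ B)` (its static version), and an insertion morphism
`ε_{A,B} : (A ⇒ B) ⊗ A ⟶ B` satisfying `(f̂ ⊗ 𝟙 A) ≫ ε_{A,B} = λ_A ≫ f`. -/
structure Insertion (C : Type u) [Category.{v} C] [MonoidalCategory C] [SymmetricCategory C] where
  hom : C → C → C
  static : ∀ {A B : C}, (A ⟶ B) → (𝟙_ C ⟶ hom A B)
  ins : ∀ A B : C, hom A B ⊗ A ⟶ B
  static_ins : ∀ {A B : C} (f : A ⟶ B), (static f ⊗ₘ 𝟙 A) ≫ ins A B = (λ_ A).hom ≫ f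

namespace Insertion

variable {C : Type u} [Category.{v} C] [MonoidalCategory C] [SymmetricCategory C]

/-- Every insertion `ε_{A,B}` is completely injective: for every object `X` the map
`h ↦ (h ⊗ 𝟙 A) ≫ ε_{A,B}` on `Hom(X, A ⇒ B)` is injective. -/
def CompletelyInjective (E : Insertion C) : Prop :=
  ∀ (X A B : C), Function.Injective (fun h : X ⟶ E.hom A B => (h ⊗ₘ 𝟙 A) ≫ E.ins A B)

/-- Double evaluation `((A ⇒ B) ⊗ (B ⇒ D)) ⊗ A ⟶ D`: after rearranging by associators and
braidings, evaluate the `(A ⇒ B)`-factor on the `A`-input via `ε_{A,B}`, then evaluate the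
`(B ⇒ D)`-factor on the result via `ε_{B,D}`. -/
def doubleEval (E : Insertion C) (A B D : C) : (E.hom A B ⊗ E.hom B D) ⊗ A ⟶ D :=
  (α_ _ _ _).hom ≫ (𝟙 (E.hom A B) ⊗ₘ (β_ (E.hom B D) A).hom) ≫ (α_ _ _ _).inv ≫
    (E.ins A B ⊗ₘ 𝟙 (E.hom B D)) ≫ (β_ B (E.hom B D)).hom ≫ E.ins B D

/-- Basic manipulations: higher order processes implementing sequential composition
`comp_{A,B,D} : (A ⇒ B) ⊗ (B ⇒ D) ⟶ (A ⇒ D)` and parallel composition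
`tens_{A,A',B,B'} : (A ⇒ A') ⊗ (B ⇒ B') ⟶ ((A ⊗ B) ⇒ (A' ⊗ B'))`, characterised by their
evaluation equations. -/
structure BasicManipulations (E : Insertion C) where
  comp : ∀ A B D : C, E.hom A B ⊗ E.hom B D ⟶ E.hom A D
  tens : ∀ A A' B B' : C, E.hom A A' ⊗ E.hom B B' ⟶ E.hom (A ⊗ B) (A' ⊗ B')
  comp_eval : ∀ A B D : C, (comp A B D ⊗ₘ 𝟙 A) ≫ E.ins A D = E.doubleEval A B D
  tens_eval : ∀ A A' B B' : C,
    (tens A A' B B' ⊗ₘ 𝟙 (A ⊗ B)) ≫ E.ins (A ⊗ B) (A' ⊗ B')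
      = tensorμ (E.hom A A') (E.hom B B') A B ≫ (E.ins A A' ⊗ₘ E.ins B B')

end Insertion


section Aux

variable {C : Type u} [Category.{v} C] [MonoidalCategory C] [SymmetricCategory C]

omit [SymmetricCategory C] in
lemma tid_aux {P Q R W : C} (p : P ⟶ Q) (q : Q ⟶ R) :
    (p ≫ q) ⊗ₘ 𝟙 W = (p ⊗ₘ 𝟙 W) ≫ (q ⊗ₘ 𝟙 W) := by
  rw [MonoidalCategory.tensorHom_comp_tensorHom, Category.comp_id]

lemma tmu_aux (W Z : C) : tensorμ W (𝟙_ C) (𝟙_ C) Z = 𝟙 _ := by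
  dsimp only [tensorμ]
  rw [braiding_tensorUnit_left]
  coherence

lemma comp_eval_aux (E : Insertion C) (bm : E.BasicManipulations) {Y Z A B D : C}
    (g : Y ⟶ E.hom A B) (h : Z ⟶ E.hom B D) :
    (((g ⊗ₘ h) ≫ bm.comp A B D) ⊗ₘ 𝟙 A) ≫ E.ins A D =
      (α_ Y Z A).hom ≫ (𝟙 Y ⊗ₘ (β_ Z A).hom) ≫ (α_ Y A Z).inv ≫ (β_ (Y ⊗ A) Z).hom ≫
        (𝟙 Z ⊗ₘ ((g ⊗ₘ 𝟙 A) ≫ E.ins A B)) ≫ (h ⊗ₘ 𝟙 B) ≫ E.ins B D := by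
  have : ((g ⊗ₘ h) ≫ bm.comp A B D) ⊗ₘ 𝟙 A = ((g ⊗ₘ h) ⊗ₘ 𝟙 A) ≫ (bm.comp A B D ⊗ₘ 𝟙 A) := by
    rw [MonoidalCategory.tensorHom_comp_tensorHom, Category.comp_id]
  rw [this, Category.assoc, bm.comp_eval, Insertion.doubleEval]
  simp [MonoidalCategory.tensorHom_def, ← MonoidalCategory.whiskerLeft_comp_assoc,
    SymmetricCategory.symmetry_assoc, whisker_exchange_assoc, whisker_exchange]
  rw [associator_inv_naturality_middle_assoc, ← comp_whiskerRight_assoc,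
      BraidedCategory.braiding_naturality_right]
  rw [associator_inv_naturality_middle_assoc, Iso.hom_inv_id_assoc, Iso.hom_inv_id_assoc]
  simp only [← comp_whiskerRight_assoc, ← comp_whiskerRight, Category.assoc]
  rw [BraidedCategory.braiding_naturality_left_assoc]

lemma v1eval_aux (E : Insertion C) (bm : E.BasicManipulations)
    (hiso : ∀ A : C, IsIso (E.ins (𝟙_ C) A)) (X A : C) :
    ((inv (E.ins (𝟙_ C) X) ≫ (𝟙 (E.hom (𝟙_ C) X) ⊗ₘ E.static (𝟙 A)) ≫ bm.tens (𝟙_ C) X A A)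
        ⊗ₘ 𝟙 (𝟙_ C ⊗ A)) ≫ E.ins (𝟙_ C ⊗ A) (X ⊗ A) = X ◁ (λ_ A).hom := by
  haveI := hiso X
  rw [tid_aux, tid_aux, Category.assoc, Category.assoc, bm.tens_eval]
  rw [MonoidalCategory.tensorHom_id, MonoidalCategory.tensorHom_id,
      tensorμ_natural_left_assoc, tmu_aux, Category.id_comp]
  have hA : E.static (𝟙 A) ▷ A ≫ E.ins A A = (λ_ A).hom := by
    rw [← MonoidalCategory.tensorHom_id, E.static_ins, Category.comp_id]
  rw [MonoidalCategory.tensorHom_comp_tensorHom, hA, MonoidalCategory.id_whiskerRight, Category.id_comp]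
  rw [MonoidalCategory.tensorHom_def, ← comp_whiskerRight_assoc, IsIso.inv_hom_id,
      MonoidalCategory.id_whiskerRight, Category.id_comp]

lemma keval_aux (E : Insertion C) (bm : E.BasicManipulations)
    (hiso : ∀ A : C, IsIso (E.ins (𝟙_ C) A)) (X A : C) :
    ((((λ_ X).inv ≫ ((E.static (λ_ A).inv ⊗ₘ
          (inv (E.ins (𝟙_ C) X) ≫ (𝟙 (E.hom (𝟙_ C) X) ⊗ₘ E.static (𝟙 A)) ≫ bm.tens (𝟙_ C) X A A))
        ≫ bm.comp A (𝟙_ C ⊗ A) (X ⊗ A)))) ⊗ₘ 𝟙 A) ≫ E.ins A (X ⊗ A) = 𝟙 (X ⊗ A) := by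
  rw [tid_aux, Category.assoc, comp_eval_aux E bm, v1eval_aux E bm hiso]
  have h1 : (E.static (λ_ A).inv ⊗ₘ 𝟙 A) ≫ E.ins A (𝟙_ C ⊗ A) = 𝟙 (𝟙_ C ⊗ A) := by
    rw [E.static_ins, Iso.hom_inv_id]
  rw [h1]
  simp

end Aux

/-- An SMC with a completely injective insertion structure, basic manipulations,
and `ε_{I,A}` an isomorphism for every `A`, is closed symmetric monoidal: every
`f : X ⊗ A ⟶ B` has a unique currying `f̄ : X ⟶ (A ⇒ B)` with `(f̄ ⊗ 𝟙 A) ≫ ε_{A,B} = f`. -/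
theorem stmt0 {C : Type u} [Category.{v} C] [MonoidalCategory C] [SymmetricCategory C]
    (E : Insertion C) (hinj : E.CompletelyInjective) (bm : E.BasicManipulations)
    (hiso : ∀ A : C, IsIso (E.ins (𝟙_ C) A)) :
    ∀ {X A B : C} (f : X ⊗ A ⟶ B),
      ∃! fbar : X ⟶ E.hom A B, (fbar ⊗ₘ 𝟙 A) ≫ E.ins A B = f := by
  intro X A B f
  set k : X ⟶ E.hom A (X ⊗ A) :=
    (λ_ X).inv ≫ ((E.static (λ_ A).inv ⊗ₘ
        (inv (E.ins (𝟙_ C) X) ≫ (𝟙 (E.hom (𝟙_ C) X) ⊗ₘ E.static (𝟙 A)) ≫ bm.tens (𝟙_ C) X A A))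
      ≫ bm.comp A (𝟙_ C ⊗ A) (X ⊗ A)) with hk
  have hkev : (k ⊗ₘ 𝟙 A) ≫ E.ins A (X ⊗ A) = 𝟙 (X ⊗ A) := keval_aux E bm hiso X A
  have heval : ((((ρ_ X).inv ≫ ((k ⊗ₘ E.static f) ≫ bm.comp A (X ⊗ A) B))) ⊗ₘ 𝟙 A)
      ≫ E.ins A B = f := by
    rw [tid_aux, Category.assoc, comp_eval_aux E bm, hkev, E.static_ins]
    simp
  exact ⟨_, heval, fun y hy => hinj X A B (hy.trans heval.symm)⟩
end

section
/- Let C be a deterministic HOPT with no correlations with single-state objects, let A and A' be causal objects of C, and let X be any object. For every state f : I ⟶ (A ⇒ A') ⊗ X, the morphism m : A ⟶ A' ⊗ X defined as the composite A ≅ I ⊗ A ⟶ ((A ⇒ A') ⊗ X) ⊗ A (via f ⊗ id_A) followed by the rearrangement (via associators and the braiding of X past A) to ((A ⇒ A') ⊗ A) ⊗ X and then by ε_{A,A'} ⊗ id_X, is non-signalling from A to X. -/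
open CategoryTheory MonoidalCategory

universe v u

/-- A higher order process theory (HOPT): a symmetric monoidal category equipped with
internal-hom objects `hom A B` (written `A ⇒ B`), evaluation (insertion) morphisms
`ε_{A,B} : (A ⇒ B) ⊗ A ⟶ B`, and, for every `f : X ⊗ A ⟶ B`, a unique currying
`f̄ : X ⟶ (A ⇒ B)` with `(f̄ ⊗ 𝟙 A) ≫ ε_{A,B} = f`. -/
structure HOPT (C : Type u) [Category.{v} C] [MonoidalCategory C] [SymmetricCategory C] where
  hom : C → C → C
  ev : ∀ A B : C, hom A B ⊗ A ⟶ B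
  curry : ∀ {X A B : C}, (X ⊗ A ⟶ B) → (X ⟶ hom A B)
  curry_ev : ∀ {X A B : C} (f : X ⊗ A ⟶ B), (curry f ⊗ₘ 𝟙 A) ≫ ev A B = f
  curry_unique : ∀ {X A B : C} {f : X ⊗ A ⟶ B} {g : X ⟶ hom A B},
    (g ⊗ₘ 𝟙 A) ≫ ev A B = f → g = curry f

namespace HOPT

variable {C : Type u} [Category.{v} C] [MonoidalCategory C] [SymmetricCategory C] (H : HOPT C)

/-- The dualising process `d_A : A ⟶ ((A ⇒ I) ⇒ I)`, i.e. the unique morphism with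
`(d_A ⊗ 𝟙) ≫ ε_{A⇒I,I} = β_{A,A⇒I} ≫ ε_{A,I}`. -/
def dual (A : C) : A ⟶ H.hom (H.hom A (𝟙_ C)) (𝟙_ C) :=
  H.curry ((β_ A (H.hom A (𝟙_ C))).hom ≫ H.ev A (𝟙_ C))

/-- Double evaluation `((A ⇒ B) ⊗ (B ⇒ D)) ⊗ A ⟶ D`: after rearranging by associators and
braidings, evaluate the `(A ⇒ B)`-factor on the `A`-factor via `ε_{A,B}`, then evaluate the
`(B ⇒ D)`-factor on the result via `ε_{B,D}`. -/
def doubleEval (A B D : C) : (H.hom A B ⊗ H.hom B D) ⊗ A ⟶ D :=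
  (α_ _ _ _).hom ≫ (𝟙 (H.hom A B) ⊗ₘ (β_ (H.hom B D) A).hom) ≫ (α_ _ _ _).inv ≫
    (H.ev A B ⊗ₘ 𝟙 (H.hom B D)) ≫ (β_ B (H.hom B D)).hom ≫ H.ev B D

/-- The lifting process `T_{A,B} : (A ⇒ B) ⟶ ((B ⇒ I) ⇒ (A ⇒ I))`, i.e. the unique morphism
whose double uncurrying is the double evaluation `doubleEval A B I`. -/
def lift (A B : C) : H.hom A B ⟶ H.hom (H.hom B (𝟙_ C)) (H.hom A (𝟙_ C)) :=
  H.curry (H.curry (H.doubleEval A B (𝟙_ C)))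

/-- The static currying `φ : (X ⇒ (A ⇒ B)) ⟶ ((X ⊗ A) ⇒ B)`, i.e. the unique morphism whose
uncurrying reassociates, evaluates the `(X ⇒ (A ⇒ B))`-factor on the `X`-factor via
`ε_{X,A⇒B}`, and then evaluates the result on the `A`-factor via `ε_{A,B}`. -/
def staticCurry (X A B : C) : H.hom X (H.hom A B) ⟶ H.hom (X ⊗ A) B :=
  H.curry ((α_ (H.hom X (H.hom A B)) X A).inv ≫ (H.ev X (H.hom A B) ⊗ₘ 𝟙 A) ≫ H.ev A B)

end HOPT

/-- A process theory is deterministic if it has exactly one scalar. -/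
def Deterministic (C : Type u) [Category.{v} C] [MonoidalCategory C] : Prop :=
  ∀ s t : 𝟙_ C ⟶ 𝟙_ C, s = t

/-- An object is causal if it has exactly one effect. -/
def Causal {C : Type u} [Category.{v} C] [MonoidalCategory C] (A : C) : Prop :=
  ∃! _e : A ⟶ 𝟙_ C, True

/-- A theory has no correlations with single-state objects if every joint state with a
single-state object is a product state. -/
def NoCorrelations (C : Type u) [Category.{v} C] [MonoidalCategory C] : Prop :=
  ∀ Y : C, (∃! _π : 𝟙_ C ⟶ Y, True) →
    ∀ (X : C) (ρ : 𝟙_ C ⟶ X ⊗ Y), ∃ (ρ' : 𝟙_ C ⟶ X) (π : 𝟙_ C ⟶ Y),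
      ρ = (λ_ (𝟙_ C)).inv ≫ (ρ' ⊗ₘ π)

/-- In a deterministic theory, `m : A ⟶ A' ⊗ X` is non-signalling from `A` to `X` if for every
effect `π' : A' ⟶ I` there are an effect `π : A ⟶ I` and a state `σ : I ⟶ X` with
`m ≫ (π' ⊗ 𝟙 X) ≫ λ_X = π ≫ σ`. -/
def NonSignalling {C : Type u} [Category.{v} C] [MonoidalCategory C] [SymmetricCategory C]
    {A A' X : C} (m : A ⟶ A' ⊗ X) : Prop :=
  ∀ π' : A' ⟶ 𝟙_ C, ∃ (π : A ⟶ 𝟙_ C) (σ : 𝟙_ C ⟶ X),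
    m ≫ (π' ⊗ₘ 𝟙 X) ≫ (λ_ X).hom = π ≫ σ

/-- in a deterministic HOPT with no correlations with single-state objects, for
causal `A, A'` and any `X`, every state `f : I ⟶ (A ⇒ A') ⊗ X` induces a process
`m : A ⟶ A' ⊗ X` which is non-signalling from `A` to `X`. -/
theorem stmt5 {C : Type u} [Category.{v} C] [MonoidalCategory C] [SymmetricCategory C]
    (H : HOPT C) (hdet : Deterministic C) (hnc : NoCorrelations C)
    (A A' : C) (hA : Causal A) (hA' : Causal A') (X : C)
    (f : 𝟙_ C ⟶ H.hom A A' ⊗ X) :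
    NonSignalling
      ((λ_ A).inv ≫ (f ⊗ₘ 𝟙 A) ≫ (α_ (H.hom A A') X A).hom ≫
        (𝟙 (H.hom A A') ⊗ₘ (β_ X A).hom) ≫ (α_ (H.hom A A') A X).inv ≫
        (H.ev A A' ⊗ₘ 𝟙 X)) := by
  intro π'
  set g := H.curry (H.ev A A' ≫ π') with hg
  obtain ⟨e, -, he⟩ := hA
  have hY : ∃! _π : 𝟙_ C ⟶ H.hom A (𝟙_ C), True := by
    refine ⟨H.curry ((λ_ A).hom ≫ e), trivial, fun y _ => ?_⟩
    refine H.curry_unique ?_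
    have h1 : (λ_ A).inv ≫ ((y ⊗ₘ 𝟙 A) ≫ H.ev A (𝟙_ C)) = e := he _ trivial
    rw [← h1]; simp
  obtain ⟨σ, π₀, hρ⟩ := hnc _ hY X (f ≫ (g ⊗ₘ 𝟙 X) ≫ (β_ _ X).hom)
  refine ⟨(λ_ A).inv ≫ (π₀ ⊗ₘ 𝟙 A) ≫ H.ev A (𝟙_ C), σ, ?_⟩
  have hfg : f ≫ (g ⊗ₘ 𝟙 X) = (λ_ (𝟙_ C)).inv ≫ (π₀ ⊗ₘ σ) := by
    have h2 : f ≫ (g ⊗ₘ 𝟙 X) =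
        ((λ_ (𝟙_ C)).inv ≫ (σ ⊗ₘ π₀)) ≫ (β_ (H.hom A (𝟙_ C)) X).inv := by
      rw [Iso.eq_comp_inv, Category.assoc, hρ]
    rw [h2, Category.assoc, ← SymmetricCategory.braiding_swap_eq_inv_braiding,
      BraidedCategory.braiding_naturality]
    simp [unitors_inv_equal]
  have key : H.ev A A' ≫ π' = (g ⊗ₘ 𝟙 A) ≫ H.ev A (𝟙_ C) := (H.curry_ev _).symm
  have e1 : (H.ev A A' ⊗ₘ 𝟙 X) ≫ (π' ⊗ₘ 𝟙 X) ≫ (λ_ X).hom =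
      ((g ⊗ₘ 𝟙 A) ⊗ₘ 𝟙 X) ≫ (H.ev A (𝟙_ C) ⊗ₘ 𝟙 X) ≫ (λ_ X).hom := by
    conv_lhs => rw [MonoidalCategory.tensorHom_comp_tensorHom_assoc, key, Category.comp_id]
    conv_rhs => rw [MonoidalCategory.tensorHom_comp_tensorHom_assoc, Category.comp_id]
  have bridge : (λ_ A).inv ≫ (f ⊗ₘ 𝟙 A) ≫ (α_ (H.hom A A') X A).hom ≫
      (𝟙 (H.hom A A') ⊗ₘ (β_ X A).hom) ≫ (α_ (H.hom A A') A X).inv ≫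
      ((g ⊗ₘ 𝟙 A) ⊗ₘ 𝟙 X) ≫ (H.ev A (𝟙_ C) ⊗ₘ 𝟙 X) ≫ (λ_ X).hom
      = (λ_ A).inv ≫ ((f ≫ (g ⊗ₘ 𝟙 X)) ⊗ₘ 𝟙 A) ≫ (α_ (H.hom A (𝟙_ C)) X A).hom ≫
      (𝟙 (H.hom A (𝟙_ C)) ⊗ₘ (β_ X A).hom) ≫ (α_ (H.hom A (𝟙_ C)) A X).inv ≫
      (H.ev A (𝟙_ C) ⊗ₘ 𝟙 X) ≫ (λ_ X).hom := by
    simp [MonoidalCategory.tensorHom_def, whisker_exchange]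
    rw [associator_naturality_left_assoc, ← whisker_exchange_assoc,
      associator_inv_naturality_left_assoc]
  have fin : (λ_ A).inv ≫ (((λ_ (𝟙_ C)).inv ≫ (π₀ ⊗ₘ σ)) ⊗ₘ 𝟙 A) ≫
      (α_ (H.hom A (𝟙_ C)) X A).hom ≫ (𝟙 (H.hom A (𝟙_ C)) ⊗ₘ (β_ X A).hom) ≫
      (α_ (H.hom A (𝟙_ C)) A X).inv ≫ (H.ev A (𝟙_ C) ⊗ₘ 𝟙 X) ≫ (λ_ X).hom
      = (λ_ A).inv ≫ (π₀ ⊗ₘ 𝟙 A) ≫ H.ev A (𝟙_ C) ≫ σ := by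
    simp [MonoidalCategory.tensorHom_def]
    rw [← MonoidalCategory.whiskerLeft_comp_assoc _ (σ ▷ A) (β_ X A).hom,
      BraidedCategory.braiding_naturality_left σ A]
    simp [whisker_exchange]
    rw [associator_inv_naturality_right_assoc, Iso.hom_inv_id_assoc, whisker_exchange_assoc]
    simp [unitors_equal]
  simp only [Category.assoc]
  rw [e1, bridge, hfg, fin]
end

section
/- Let C be a deterministic HOPT with no correlations with single-state objects, and let A, A', B, B' be causal objects with unique effects ⊥_A, ⊥_{A'}, ⊥_B, ⊥_{B'}. For every state f : I ⟶ (A ⇒ A') ⊗ (B ⇒ B'), let g : A ⊗ B ⟶ A' ⊗ B' be the induced bipartite process, i.e. g = λ⁻¹ ≫ (f ⊗ id_{A⊗B}) ≫ (middle-four interchange) ≫ (ε_{A,A'} ⊗ ε_{B,B'}). Then there exist f_A : A ⟶ A' and f_B : B ⟶ B' such that g ≫ (⊥_{A'} ⊗ id_{B'}) = ⊥_A ⊗ f_B and g ≫ (id_{A'} ⊗ ⊥_{B'}) = f_A ⊗ ⊥_B (as morphisms A ⊗ B ⟶ I ⊗ B' and A ⊗ B ⟶ A' ⊗ I respectively);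 that is, g is a non-signalling bipartite channel. -/
open CategoryTheory MonoidalCategory

universe v u

section Aux

variable {C : Type u} [Category.{v} C] [MonoidalCategory C] [SymmetricCategory C]

/-- If `X` has a unique effect, then `X ⇒ I` has a unique state. -/
lemma single_state_hom (H : HOPT C) (X : C) (bX : X ⟶ 𝟙_ C)
    (hX : ∀ e : X ⟶ 𝟙_ C, e = bX) :
    ∃! _π : 𝟙_ C ⟶ H.hom X (𝟙_ C), True := by
  refine ⟨H.curry ((λ_ X).hom ≫ bX), trivial, fun π _ => ?_⟩
  apply H.curry_unique
  have h1 := hX ((λ_ X).inv ≫ (π ⊗ₘ 𝟙 X) ≫ H.ev X (𝟙_ C))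
  calc (π ⊗ₘ 𝟙 X) ≫ H.ev X (𝟙_ C)
      = (λ_ X).hom ≫ ((λ_ X).inv ≫ (π ⊗ₘ 𝟙 X) ≫ H.ev X (𝟙_ C)) := by simp
    _ = (λ_ X).hom ≫ bX := by rw [h1]

set_option maxHeartbeats 1000000 in
/-- Evaluating a product state on a pair of processes factorizes. -/
lemma prod_state_eval {P Q A B A'' B'' : C} (π : 𝟙_ C ⟶ P) (ρ : 𝟙_ C ⟶ Q)
    (p : P ⊗ A ⟶ A'') (q : Q ⊗ B ⟶ B'') :
    (λ_ (A ⊗ B)).inv ≫ (((λ_ (𝟙_ C)).inv ≫ (π ⊗ₘ ρ)) ⊗ₘ 𝟙 (A ⊗ B)) ≫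
        tensorμ P Q A B ≫ (p ⊗ₘ q) =
      ((λ_ A).inv ≫ (π ⊗ₘ 𝟙 A) ≫ p) ⊗ₘ ((λ_ B).inv ≫ (ρ ⊗ₘ 𝟙 B) ≫ q) := by
  have hnat : ((π ⊗ₘ ρ) ⊗ₘ (𝟙 A ⊗ₘ 𝟙 B)) ≫ tensorμ P Q A B =
      tensorμ (𝟙_ C) (𝟙_ C) A B ≫ ((π ⊗ₘ 𝟙 A) ⊗ₘ (ρ ⊗ₘ 𝟙 B)) :=
    tensorμ_natural π ρ (𝟙 A) (𝟙 B)
  have hmono : ((λ_ A).hom ⊗ₘ (λ_ B).hom) ≫ ((λ_ A).inv ⊗ₘ (λ_ B).inv) = 𝟙 _ := by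
    rw [tensorHom_comp_tensorHom]; simp
  have hcoh : (λ_ (A ⊗ B)).inv ≫ ((λ_ (𝟙_ C)).inv ⊗ₘ 𝟙 (A ⊗ B)) ≫
      tensorμ (𝟙_ C) (𝟙_ C) A B = ((λ_ A).inv ⊗ₘ (λ_ B).inv) := by
    have h := tensor_left_unitality (C := C) A B
    rw [tensorHom_id, Iso.inv_comp_eq]
    calc ((λ_ (𝟙_ C)).inv ▷ (A ⊗ B)) ≫ tensorμ (𝟙_ C) (𝟙_ C) A B
        = (((λ_ (𝟙_ C)).inv ▷ (A ⊗ B)) ≫ tensorμ (𝟙_ C) (𝟙_ C) A B ≫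
            ((λ_ A).hom ⊗ₘ (λ_ B).hom)) ≫ ((λ_ A).inv ⊗ₘ (λ_ B).inv) := by
          simp only [Category.assoc, hmono, Category.comp_id]
      _ = (λ_ (A ⊗ B)).hom ≫ ((λ_ A).inv ⊗ₘ (λ_ B).inv) := by rw [← h]
  have hsplit : ((λ_ (𝟙_ C)).inv ≫ (π ⊗ₘ ρ)) ⊗ₘ 𝟙 (A ⊗ B) =
      ((λ_ (𝟙_ C)).inv ⊗ₘ 𝟙 (A ⊗ B)) ≫ ((π ⊗ₘ ρ) ⊗ₘ (𝟙 A ⊗ₘ 𝟙 B)) := by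
    rw [tensorHom_comp_tensorHom, id_tensorHom_id, Category.comp_id]
  calc (λ_ (A ⊗ B)).inv ≫ (((λ_ (𝟙_ C)).inv ≫ (π ⊗ₘ ρ)) ⊗ₘ 𝟙 (A ⊗ B)) ≫
        tensorμ P Q A B ≫ (p ⊗ₘ q)
      = ((λ_ (A ⊗ B)).inv ≫ ((λ_ (𝟙_ C)).inv ⊗ₘ 𝟙 (A ⊗ B)) ≫
          tensorμ (𝟙_ C) (𝟙_ C) A B) ≫ ((π ⊗ₘ 𝟙 A) ⊗ₘ (ρ ⊗ₘ 𝟙 B)) ≫ (p ⊗ₘ q) := by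
        rw [hsplit]
        simp only [Category.assoc]
        rw [← Category.assoc ((π ⊗ₘ ρ) ⊗ₘ (𝟙 A ⊗ₘ 𝟙 B)), hnat]
        simp only [Category.assoc]
    _ = ((λ_ A).inv ⊗ₘ (λ_ B).inv) ≫ ((π ⊗ₘ 𝟙 A) ⊗ₘ (ρ ⊗ₘ 𝟙 B)) ≫ (p ⊗ₘ q) := by
        rw [hcoh]
    _ = ((λ_ A).inv ≫ (π ⊗ₘ 𝟙 A) ≫ p) ⊗ₘ ((λ_ B).inv ≫ (ρ ⊗ₘ 𝟙 B) ≫ q) := by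
        rw [tensorHom_comp_tensorHom, tensorHom_comp_tensorHom]

end Aux

set_option maxHeartbeats 1000000 in
/-- in a deterministic HOPT with no correlations with single-state objects, for
causal objects `A, A', B, B'` with unique effects `⊥_A, ⊥_{A'}, ⊥_B, ⊥_{B'}`, every state
`f : I ⟶ (A ⇒ A') ⊗ₘ (B ⇒ B')` induces a bipartite process `g : A ⊗ B ⟶ A' ⊗ₘ B'` which is a
non-signalling bipartite channel. -/
theorem stmt6 {C : Type u} [Category.{v} C] [MonoidalCategory C] [SymmetricCategory C]
    (H : HOPT C) (hdet : Deterministic C) (hnc : NoCorrelations C)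
    (A A' B B' : C)
    (bA : A ⟶ 𝟙_ C) (bA' : A' ⟶ 𝟙_ C) (bB : B ⟶ 𝟙_ C) (bB' : B' ⟶ 𝟙_ C)
    (hA : ∀ e : A ⟶ 𝟙_ C, e = bA) (hA' : ∀ e : A' ⟶ 𝟙_ C, e = bA')
    (hB : ∀ e : B ⟶ 𝟙_ C, e = bB) (hB' : ∀ e : B' ⟶ 𝟙_ C, e = bB')
    (f : 𝟙_ C ⟶ H.hom A A' ⊗ H.hom B B')
    (g : A ⊗ B ⟶ A' ⊗ B')
    (hg : g = (λ_ (A ⊗ B)).inv ≫ (f ⊗ₘ 𝟙 (A ⊗ B)) ≫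
      tensorμ (H.hom A A') (H.hom B B') A B ≫ (H.ev A A' ⊗ₘ H.ev B B')) :
    ∃ (fA : A ⟶ A') (fB : B ⟶ B'),
      g ≫ (bA' ⊗ₘ 𝟙 B') = bA ⊗ₘ fB ∧ g ≫ (𝟙 A' ⊗ₘ bB') = fA ⊗ₘ bB := by
  -- curried "discard after evaluation" processes
  set KA := H.curry (H.ev A A' ≫ bA') with hKAdef
  have hKA : (KA ⊗ₘ 𝟙 A) ≫ H.ev A (𝟙_ C) = H.ev A A' ≫ bA' := H.curry_ev _
  set KB := H.curry (H.ev B B' ≫ bB') with hKBdef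
  have hKB : (KB ⊗ₘ 𝟙 B) ≫ H.ev B (𝟙_ C) = H.ev B B' ≫ bB' := H.curry_ev _
  -- factorization for the B-marginal (discard A' side)
  obtain ⟨ρB, πA, hfac1⟩ := hnc (H.hom A (𝟙_ C)) (single_state_hom H A bA hA)
    (H.hom B B') (f ≫ (KA ⊗ₘ 𝟙 (H.hom B B')) ≫ (β_ (H.hom A (𝟙_ C)) (H.hom B B')).hom)
  -- factorization for the A-marginal (discard B' side)
  obtain ⟨ρA, πB, hfac2⟩ := hnc (H.hom B (𝟙_ C)) (single_state_hom H B bB hB)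
    (H.hom A A') (f ≫ (𝟙 (H.hom A A') ⊗ₘ KB))
  have hβI : (β_ (𝟙_ C) (𝟙_ C)).hom = 𝟙 _ := by
    rw [← cancel_mono (λ_ (𝟙_ C)).hom, braiding_leftUnitor, unitors_equal,
      Category.id_comp]
  have hfac1' : f ≫ (KA ⊗ₘ 𝟙 (H.hom B B')) = (λ_ (𝟙_ C)).inv ≫ (πA ⊗ₘ ρB) := by
    have hb : (πA ⊗ₘ ρB) ≫ (β_ (H.hom A (𝟙_ C)) (H.hom B B')).hom =
        (β_ (𝟙_ C) (𝟙_ C)).hom ≫ (ρB ⊗ₘ πA) := BraidedCategory.braiding_naturality πA ρB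
    have hσ : f ≫ (KA ⊗ₘ 𝟙 (H.hom B B')) =
        (f ≫ (KA ⊗ₘ 𝟙 (H.hom B B')) ≫ (β_ (H.hom A (𝟙_ C)) (H.hom B B')).hom) ≫
          (β_ (H.hom A (𝟙_ C)) (H.hom B B')).inv := by
      simp
    rw [hσ, hfac1]
    rw [hβI, Category.id_comp] at hb
    rw [Category.assoc, ← hb]
    simp
  -- the two marginal maps
  refine ⟨(λ_ A).inv ≫ (ρA ⊗ₘ 𝟙 A) ≫ H.ev A A',
    (λ_ B).inv ≫ (ρB ⊗ₘ 𝟙 B) ≫ H.ev B B', ?_, ?_⟩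
  · -- first conjunct: discarding A'
    have hinner : (H.ev A A' ⊗ₘ H.ev B B') ≫ (bA' ⊗ₘ 𝟙 B') =
        ((KA ⊗ₘ 𝟙 A) ⊗ₘ (𝟙 (H.hom B B') ⊗ₘ 𝟙 B)) ≫ (H.ev A (𝟙_ C) ⊗ₘ H.ev B B') := by
      rw [tensorHom_comp_tensorHom, tensorHom_comp_tensorHom, hKA, id_tensorHom_id, Category.id_comp, Category.comp_id]
    have hnat := tensorμ_natural KA (𝟙 (H.hom B B')) (𝟙 A) (𝟙 B)
    have hsplit : (f ≫ (KA ⊗ₘ 𝟙 (H.hom B B'))) ⊗ₘ 𝟙 (A ⊗ B) =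
        (f ⊗ₘ 𝟙 (A ⊗ B)) ≫ ((KA ⊗ₘ 𝟙 (H.hom B B')) ⊗ₘ (𝟙 A ⊗ₘ 𝟙 B)) := by
      rw [tensorHom_comp_tensorHom, id_tensorHom_id, Category.comp_id]
    calc g ≫ (bA' ⊗ₘ 𝟙 B')
        = (λ_ (A ⊗ B)).inv ≫ (f ⊗ₘ 𝟙 (A ⊗ B)) ≫
            (((KA ⊗ₘ 𝟙 (H.hom B B')) ⊗ₘ (𝟙 A ⊗ₘ 𝟙 B)) ≫
              tensorμ (H.hom A (𝟙_ C)) (H.hom B B') A B) ≫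
            (H.ev A (𝟙_ C) ⊗ₘ H.ev B B') := by
          rw [hg, hnat]
          simp only [Category.assoc, hinner]
      _ = (λ_ (A ⊗ B)).inv ≫ ((f ≫ (KA ⊗ₘ 𝟙 (H.hom B B'))) ⊗ₘ 𝟙 (A ⊗ B)) ≫
            tensorμ (H.hom A (𝟙_ C)) (H.hom B B') A B ≫
            (H.ev A (𝟙_ C) ⊗ₘ H.ev B B') := by
          rw [hsplit]; simp only [Category.assoc]
      _ = bA ⊗ₘ ((λ_ B).inv ≫ (ρB ⊗ₘ 𝟙 B) ≫ H.ev B B') := by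
          rw [hfac1', prod_state_eval,
            hA ((λ_ A).inv ≫ (πA ⊗ₘ 𝟙 A) ≫ H.ev A (𝟙_ C))]
  · -- second conjunct: discarding B'
    have hinner : (H.ev A A' ⊗ₘ H.ev B B') ≫ (𝟙 A' ⊗ₘ bB') =
        ((𝟙 (H.hom A A') ⊗ₘ 𝟙 A) ⊗ₘ (KB ⊗ₘ 𝟙 B)) ≫ (H.ev A A' ⊗ₘ H.ev B (𝟙_ C)) := by
      rw [tensorHom_comp_tensorHom, tensorHom_comp_tensorHom, hKB, id_tensorHom_id, Category.id_comp,
        Category.comp_id]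
    have hnat := tensorμ_natural (𝟙 (H.hom A A')) KB (𝟙 A) (𝟙 B)
    have hsplit : (f ≫ (𝟙 (H.hom A A') ⊗ₘ KB)) ⊗ₘ 𝟙 (A ⊗ B) =
        (f ⊗ₘ 𝟙 (A ⊗ B)) ≫ ((𝟙 (H.hom A A') ⊗ₘ KB) ⊗ₘ (𝟙 A ⊗ₘ 𝟙 B)) := by
      rw [tensorHom_comp_tensorHom, id_tensorHom_id, Category.comp_id]
    calc g ≫ (𝟙 A' ⊗ₘ bB')
        = (λ_ (A ⊗ B)).inv ≫ (f ⊗ₘ 𝟙 (A ⊗ B)) ≫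
            (((𝟙 (H.hom A A') ⊗ₘ KB) ⊗ₘ (𝟙 A ⊗ₘ 𝟙 B)) ≫
              tensorμ (H.hom A A') (H.hom B (𝟙_ C)) A B) ≫
            (H.ev A A' ⊗ₘ H.ev B (𝟙_ C)) := by
          rw [hg, hnat]
          simp only [Category.assoc, hinner]
      _ = (λ_ (A ⊗ B)).inv ≫ ((f ≫ (𝟙 (H.hom A A') ⊗ₘ KB)) ⊗ₘ 𝟙 (A ⊗ B)) ≫
            tensorμ (H.hom A A') (H.hom B (𝟙_ C)) A B ≫
            (H.ev A A' ⊗ₘ H.ev B (𝟙_ C)) := by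
          rw [hsplit]; simp only [Category.assoc]
      _ = ((λ_ A).inv ≫ (ρA ⊗ₘ 𝟙 A) ≫ H.ev A A') ⊗ₘ bB := by
          rw [hfac2, prod_state_eval,
            hB ((λ_ B).inv ≫ (πB ⊗ₘ 𝟙 B) ≫ H.ev B (𝟙_ C))]
end

section
/- Let C be a HOPT. The following are equivalent: (1) for all objects A, B of C the lifting process T_{A,B} : (A ⇒ B) ⟶ ((B ⇒ I) ⇒ (A ⇒ I)) is an isomorphism; (2) for every object B of C the lifting process T_{I,B} is an isomorphism; (3) for every object B of C the dualising process d_B : B ⟶ ((B ⇒ I) ⇒ I) is an isomorphism. -/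
open CategoryTheory MonoidalCategory

universe v u

section Aux

variable {C : Type u} [Category.{v} C]

/-- A morphism is an isomorphism iff postcomposition with it is bijective on all hom-sets. -/
lemma isIso_iff_postcomp_bijective {X Y : C} (f : X ⟶ Y) :
    IsIso f ↔ ∀ Z : C, Function.Bijective (fun g : Z ⟶ X => g ≫ f) := by
  constructor
  · intro hf Z
    exact ⟨fun g h hgh => by simpa using congrArg (· ≫ inv f) hgh,
      fun h => ⟨h ≫ inv f, by simp⟩⟩
  · intro h
    obtain ⟨g, hg⟩ := (h Y).2 (𝟙 Y)
    refine ⟨g, ?_, hg⟩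
    apply (h X).1
    simp only [Category.assoc, hg, Category.comp_id, Category.id_comp]

lemma bijective_precomp_iso {X Y Z : C} (e : X ≅ Y) :
    Function.Bijective (fun g : Y ⟶ Z => e.hom ≫ g) :=
  Equiv.bijective ⟨fun g => e.hom ≫ g, fun g => e.inv ≫ g, fun g => by simp, fun g => by simp⟩

lemma bijective_postcomp_iso {X Y Z : C} (e : Y ≅ Z) :
    Function.Bijective (fun g : X ⟶ Y => g ≫ e.hom) :=
  Equiv.bijective ⟨fun g => g ≫ e.hom, fun g => g ≫ e.inv, fun g => by simp, fun g => by simp⟩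

end Aux

namespace HOPT

variable {C : Type u} [Category.{v} C] [MonoidalCategory C] [SymmetricCategory C] (H : HOPT C)

def uncurry {X A B : C} (g : X ⟶ H.hom A B) : X ⊗ A ⟶ B := (g ⊗ₘ 𝟙 A) ≫ H.ev A B

lemma curry_ev' {X A B : C} (f : X ⊗ A ⟶ B) : H.curry f ▷ A ≫ H.ev A B = f := by
  rw [← tensorHom_id]; exact H.curry_ev f

lemma curry_uncurry {X A B : C} (g : X ⟶ H.hom A B) : H.curry (H.uncurry g) = g :=
  (H.curry_unique rfl).symm

lemma uncurry_curry {X A B : C} (f : X ⊗ A ⟶ B) : H.uncurry (H.curry f) = f := H.curry_ev f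

def uncurryEquiv (X A B : C) : (X ⟶ H.hom A B) ≃ (X ⊗ A ⟶ B) where
  toFun := H.uncurry
  invFun := H.curry
  left_inv := H.curry_uncurry
  right_inv := H.uncurry_curry

/-- `Φ_B : (Z ⟶ B) → (Z ⊗ (B ⇒ I) ⟶ I)`. -/
def Phi (B Z : C) (g : Z ⟶ B) : Z ⊗ H.hom B (𝟙_ C) ⟶ 𝟙_ C :=
  (g ⊗ₘ 𝟙 _) ≫ (β_ B (H.hom B (𝟙_ C))).hom ≫ H.ev B (𝟙_ C)

lemma uncurry_comp_dual {B Z : C} (g : Z ⟶ B) :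
    H.uncurry (g ≫ H.dual B) = H.Phi B Z g := by
  simp [uncurry, dual, Phi, H.curry_ev']

lemma dual_isIso_iff (B : C) : IsIso (H.dual B) ↔ ∀ Z : C, Function.Bijective (H.Phi B Z) := by
  rw [isIso_iff_postcomp_bijective]
  refine forall_congr' fun Z => ?_
  have : H.Phi B Z = H.uncurryEquiv Z _ _ ∘ (fun g : Z ⟶ B => g ≫ H.dual B) := by
    funext g; exact (H.uncurry_comp_dual g).symm
  rw [this, Function.Bijective.of_comp_iff' (H.uncurryEquiv Z _ _).bijective]

/-- the shuffle iso `(Z ⊗ W) ⊗ A ≅ (Z ⊗ A) ⊗ W`. -/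
def shuffle (Z W A : C) : (Z ⊗ W) ⊗ A ≅ (Z ⊗ A) ⊗ W :=
  α_ Z W A ≪≫ tensorIso (Iso.refl Z) (β_ W A) ≪≫ (α_ Z A W).symm

lemma uncurry_uncurry_comp_lift {A B Z : C} (g : Z ⟶ H.hom A B) :
    H.uncurry (H.uncurry (g ≫ H.lift A B)) =
      (shuffle Z (H.hom B (𝟙_ C)) A).hom ≫ H.Phi B (Z ⊗ A) (H.uncurry g) := by
  have h1 : H.uncurry (H.uncurry (g ≫ H.lift A B)) =
      ((g ⊗ₘ 𝟙 (H.hom B (𝟙_ C))) ⊗ₘ 𝟙 A) ≫ H.doubleEval A B (𝟙_ C) := by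
    simp [uncurry, lift, H.curry_ev']
  rw [h1]
  simp only [doubleEval, Phi, shuffle, uncurry, Iso.trans_hom, Iso.symm_hom, Iso.refl_hom,
    tensorIso_hom, Category.assoc, tensorHom_id, id_tensorHom]
  rw [associator_naturality_left_assoc, ← whisker_exchange_assoc,
    associator_inv_naturality_left_assoc, ← comp_whiskerRight_assoc]

end HOPT

namespace HOPT

variable {C : Type u} [Category.{v} C] [MonoidalCategory C] [SymmetricCategory C] (H : HOPT C)

lemma lift_isIso_iff (A B : C) :
    IsIso (H.lift A B) ↔ ∀ Z : C, Function.Bijective (H.Phi B (Z ⊗ A)) := by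
  rw [isIso_iff_postcomp_bijective]
  refine forall_congr' fun Z => ?_
  have h1 : (fun g : Z ⟶ H.hom A B => H.uncurry (H.uncurry (g ≫ H.lift A B)))
      = (H.uncurryEquiv (Z ⊗ H.hom B (𝟙_ C)) A (𝟙_ C))
        ∘ (H.uncurryEquiv Z (H.hom B (𝟙_ C)) (H.hom A (𝟙_ C)))
        ∘ (fun g => g ≫ H.lift A B) := by
    funext g; rfl
  have h2 : (fun g : Z ⟶ H.hom A B => H.uncurry (H.uncurry (g ≫ H.lift A B)))
      = (fun k : (Z ⊗ A) ⊗ H.hom B (𝟙_ C) ⟶ 𝟙_ C =>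
            (shuffle Z (H.hom B (𝟙_ C)) A).hom ≫ k)
        ∘ H.Phi B (Z ⊗ A) ∘ (H.uncurryEquiv Z A B) := by
    funext g; exact H.uncurry_uncurry_comp_lift g
  have key : Function.Bijective (fun g : Z ⟶ H.hom A B => g ≫ H.lift A B)
      ↔ Function.Bijective ((fun k : (Z ⊗ A) ⊗ H.hom B (𝟙_ C) ⟶ 𝟙_ C =>
            (shuffle Z (H.hom B (𝟙_ C)) A).hom ≫ k)
        ∘ H.Phi B (Z ⊗ A) ∘ (H.uncurryEquiv Z A B)) := by
    rw [← h2, h1]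
    exact ((Function.Bijective.of_comp_iff' (H.uncurryEquiv _ _ _).bijective _).trans
      (Function.Bijective.of_comp_iff' (H.uncurryEquiv _ _ _).bijective _)).symm
  rw [key, Function.Bijective.of_comp_iff'
      (bijective_precomp_iso (shuffle Z (H.hom B (𝟙_ C)) A)),
    Function.Bijective.of_comp_iff _ (H.uncurryEquiv Z A B).bijective]

lemma phi_bij_transport {B Z : C} (h : Function.Bijective (H.Phi B (Z ⊗ 𝟙_ C))) :
    Function.Bijective (H.Phi B Z) := by
  have heq : H.Phi B Z
      = (fun k : (Z ⊗ 𝟙_ C) ⊗ H.hom B (𝟙_ C) ⟶ 𝟙_ C =>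
            (tensorIso (ρ_ Z).symm (Iso.refl (H.hom B (𝟙_ C)))).hom ≫ k)
        ∘ H.Phi B (Z ⊗ 𝟙_ C) ∘ (fun g : Z ⟶ B => (ρ_ Z).hom ≫ g) := by
    funext g
    simp only [Phi, tensorIso_hom, Iso.symm_hom, Iso.refl_hom, Function.comp_apply,
      tensorHom_comp_tensorHom_assoc, Iso.inv_hom_id_assoc, Category.comp_id]
  rw [heq]
  exact (bijective_precomp_iso _).comp (h.comp (bijective_precomp_iso (ρ_ Z)))

end HOPT

/-- in a HOPT the following are equivalent: (1) every lifting process `T_{A,B}`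
is an isomorphism; (2) every `T_{I,B}` is an isomorphism; (3) every dualising process `d_B`
is an isomorphism. -/
theorem stmt8 {C : Type u} [Category.{v} C] [MonoidalCategory C] [SymmetricCategory C]
    (H : HOPT C) :
    List.TFAE [∀ A B : C, IsIso (H.lift A B),
               ∀ B : C, IsIso (H.lift (𝟙_ C) B),
               ∀ B : C, IsIso (H.dual B)] := by
  tfae_have 1 → 2 := fun h B => h _ B
  tfae_have 2 → 3 := by
    intro h B
    rw [H.dual_isIso_iff]
    intro Z
    exact H.phi_bij_transport (((H.lift_isIso_iff (𝟙_ C) B).mp (h B)) Z)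
  tfae_have 3 → 1 := by
    intro h A B
    rw [H.lift_isIso_iff]
    intro Z
    exact ((H.dual_isIso_iff B).mp (h B)) (Z ⊗ A)
  tfae_finish
end

section
/- Let C be a deterministic HOPT with no correlations with single-state objects such that the tensor product preserves equivalence of double duals, and let A and A' be causal objects such that d_A and d_{A'} are isomorphisms. Then the object A ⇒ A' has no-signalling states. -/
open CategoryTheory MonoidalCategory

universe v u

/-- An object `Y` of a deterministic theory has no-signalling states if for every `X` and
every state `m : I ⟶ Y ⊗ X` there is a state `m' : I ⟶ X` with
`m ≫ (Π ⊗ 𝟙 X) ≫ λ_X = m'` for every effect `Π : Y ⟶ I`. -/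
def HasNoSignallingStates {C : Type u} [Category.{v} C] [MonoidalCategory C]
    [SymmetricCategory C] (Y : C) : Prop :=
  ∀ (X : C) (m : 𝟙_ C ⟶ Y ⊗ X), ∃ m' : 𝟙_ C ⟶ X,
    ∀ P : Y ⟶ 𝟙_ C, m ≫ (P ⊗ₘ 𝟙 X) ≫ (λ_ X).hom = m'

namespace HOPT

variable {C : Type u} [Category.{v} C] [MonoidalCategory C] [SymmetricCategory C] (H : HOPT C)

lemma uncurry_eq {X A B : C} (g : X ⟶ H.hom A B) :
    H.uncurry g = (g ⊗ₘ 𝟙 A) ≫ H.ev A B := rfl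

lemma hom_ext {X A B : C} {g₁ g₂ : X ⟶ H.hom A B} (h : H.uncurry g₁ = H.uncurry g₂) :
    g₁ = g₂ :=
  (H.curry_unique (f := H.uncurry g₂) h).trans (H.curry_unique (f := H.uncurry g₂) rfl).symm

lemma comp_uncurry {W X A B : C} (h : W ⟶ X) (g : X ⟶ H.hom A B) :
    H.uncurry (h ≫ g) = (h ⊗ₘ 𝟙 A) ≫ H.uncurry g := by
  simp [uncurry, comp_tensor_id]

@[simp] lemma uncurry_id {A B : C} : H.uncurry (𝟙 (H.hom A B)) = H.ev A B := by
  simp [uncurry]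

lemma dual_uncurry (A : C) :
    H.uncurry (H.dual A) = (β_ A (H.hom A (𝟙_ C))).hom ≫ H.ev A (𝟙_ C) := H.curry_ev _

def post {A B B' : C} (g : B ⟶ B') : H.hom A B ⟶ H.hom A B' := H.curry (H.ev A B ≫ g)

lemma post_uncurry {A B B' : C} (g : B ⟶ B') :
    H.uncurry (H.post (A := A) g) = H.ev A B ≫ g := H.curry_ev _

lemma post_comp {A B B' B'' : C} (g : B ⟶ B') (g' : B' ⟶ B'') :
    H.post (A := A) (g ≫ g') = H.post g ≫ H.post g' := by
  apply H.hom_ext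
  rw [comp_uncurry, post_uncurry, post_uncurry, ← Category.assoc (H.post g ⊗ₘ 𝟙 A),
    ← uncurry_eq, post_uncurry]
  simp

lemma post_id {A B : C} : H.post (A := A) (𝟙 B) = 𝟙 (H.hom A B) := by
  apply H.hom_ext
  rw [post_uncurry]; simp

lemma isIso_post {A B B' : C} (g : B ⟶ B') [IsIso g] : IsIso (H.post (A := A) g) := by
  refine ⟨H.post (inv g), ?_, ?_⟩ <;> rw [← post_comp] <;> simp [post_id]

def pre {B B' : C} (g : B ⟶ B') : H.hom B' (𝟙_ C) ⟶ H.hom B (𝟙_ C) :=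
  H.curry ((𝟙 (H.hom B' (𝟙_ C)) ⊗ₘ g) ≫ H.ev B' (𝟙_ C))

lemma pre_uncurry {B B' : C} (g : B ⟶ B') :
    H.uncurry (H.pre g) = (𝟙 (H.hom B' (𝟙_ C)) ⊗ₘ g) ≫ H.ev B' (𝟙_ C) := H.curry_ev _

lemma pre_comp {B B' B'' : C} (g : B ⟶ B') (g' : B' ⟶ B'') :
    H.pre (g ≫ g') = H.pre g' ≫ H.pre g := by
  apply H.hom_ext
  rw [comp_uncurry, pre_uncurry, pre_uncurry, ← Category.assoc,
    tensor_id_comp_id_tensor, ← id_tensor_comp_tensor_id g (H.pre g'), Category.assoc,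
    ← uncurry_eq, pre_uncurry]
  simp [id_tensor_comp]

lemma pre_id {B : C} : H.pre (𝟙 B) = 𝟙 (H.hom B (𝟙_ C)) := by
  apply H.hom_ext
  rw [pre_uncurry]; simp

lemma isIso_pre {B B' : C} (g : B ⟶ B') [IsIso g] : IsIso (H.pre g) := by
  refine ⟨H.pre (inv g), ?_, ?_⟩ <;> rw [← pre_comp] <;> simp [pre_id]

lemma dual_hom_triangle (B : C) :
    H.dual (H.hom B (𝟙_ C)) ≫ H.pre (H.dual B) = 𝟙 (H.hom B (𝟙_ C)) := by
  apply H.hom_ext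
  rw [comp_uncurry, pre_uncurry, ← Category.assoc,
    tensor_id_comp_id_tensor, ← id_tensor_comp_tensor_id (H.dual B) (H.dual (H.hom B (𝟙_ C))),
    Category.assoc, ← uncurry_eq, dual_uncurry, uncurry_id,
    ← Category.assoc, BraidedCategory.braiding_naturality (𝟙 _) (H.dual B),
    Category.assoc, ← uncurry_eq, dual_uncurry, ← Category.assoc,
    SymmetricCategory.symmetry]
  simp

lemma isIso_dual_hom (B : C) (h : IsIso (H.dual B)) :
    IsIso (H.dual (H.hom B (𝟙_ C))) := by
  have hpre : IsIso (H.pre (H.dual B)) := H.isIso_pre _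
  have := H.dual_hom_triangle B
  have heq : H.dual (H.hom B (𝟙_ C)) = inv (H.pre (H.dual B)) := by
    rw [← Category.comp_id (H.dual (H.hom B (𝟙_ C))), ← IsIso.hom_inv_id (H.pre (H.dual B)),
      ← Category.assoc, this, Category.id_comp]
  rw [heq]
  infer_instance

/-- Inverse of static currying. -/
def unstatic (X A B : C) : H.hom (X ⊗ A) B ⟶ H.hom X (H.hom A B) :=
  H.curry (H.curry ((α_ (H.hom (X ⊗ A) B) X A).hom ≫ H.ev (X ⊗ A) B))

lemma staticCurry_unstatic (X A B : C) :
    H.staticCurry X A B ≫ H.unstatic X A B = 𝟙 _ := by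
  apply H.hom_ext
  rw [comp_uncurry, unstatic, uncurry_curry, uncurry_id]
  apply H.hom_ext
  rw [comp_uncurry, uncurry_curry, ← Category.assoc, associator_naturality, id_tensorHom_id,
    Category.assoc, ← uncurry_eq, staticCurry, uncurry_curry, uncurry_eq]
  simp

lemma unstatic_staticCurry (X A B : C) :
    H.unstatic X A B ≫ H.staticCurry X A B = 𝟙 _ := by
  apply H.hom_ext
  rw [comp_uncurry, staticCurry, uncurry_curry, uncurry_id,
    show (𝟙 (X ⊗ A) : X ⊗ A ⟶ X ⊗ A) = 𝟙 X ⊗ₘ 𝟙 A from (id_tensorHom_id X A).symm,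
    ← Category.assoc, associator_inv_naturality, Category.assoc,
    ← Category.assoc ((H.unstatic X A B ⊗ₘ 𝟙 X) ⊗ₘ 𝟙 A), ← comp_tensor_id,
    show (H.unstatic X A B ⊗ₘ 𝟙 X) ≫ H.ev X (H.hom A B) =
      H.curry ((α_ (H.hom (X ⊗ A) B) X A).hom ≫ H.ev (X ⊗ A) B) from H.uncurry_curry _,
    H.curry_ev]
  simp

lemma isIso_staticCurry (X A B : C) : IsIso (H.staticCurry X A B) :=
  ⟨H.unstatic X A B, H.staticCurry_unstatic X A B, H.unstatic_staticCurry X A B⟩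


lemma state_uncurry {A' : C} (h : Causal A') (e' : A' ⟶ 𝟙_ C)
    (p : 𝟙_ C ⟶ H.hom A' (𝟙_ C)) :
    (p ⊗ₘ 𝟙 A') ≫ H.ev A' (𝟙_ C) = (λ_ A').hom ≫ e' := by
  obtain ⟨e0, -, he0⟩ := h
  have h1 : e' = e0 := he0 e' trivial
  have h2 : (λ_ A').inv ≫ (p ⊗ₘ 𝟙 A') ≫ H.ev A' (𝟙_ C) = e0 := he0 _ trivial
  rw [h1, ← h2]
  simp

lemma single_state {A' : C} (h : Causal A') : ∃! _p : 𝟙_ C ⟶ H.hom A' (𝟙_ C), True := by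
  obtain ⟨e0, -, he0⟩ := h
  refine ⟨H.curry ((λ_ A').hom ≫ e0), trivial, ?_⟩
  intro p _
  apply H.hom_ext
  rw [uncurry_curry, uncurry_eq, H.state_uncurry ⟨e0, trivial, he0⟩ e0 p]

lemma theta_uncurry (A A' : C) :
    H.uncurry (H.post (A := A) (H.dual A') ≫ H.staticCurry A (H.hom A' (𝟙_ C)) (𝟙_ C)) =
      (α_ (H.hom A A') A (H.hom A' (𝟙_ C))).inv ≫ (H.ev A A' ⊗ₘ 𝟙 (H.hom A' (𝟙_ C))) ≫
        (β_ A' (H.hom A' (𝟙_ C))).hom ≫ H.ev A' (𝟙_ C) := by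
  rw [comp_uncurry, staticCurry, uncurry_curry,
    show (𝟙 (A ⊗ H.hom A' (𝟙_ C)) : _) = 𝟙 A ⊗ₘ 𝟙 (H.hom A' (𝟙_ C)) from (id_tensorHom_id _ _).symm,
    ← Category.assoc, associator_inv_naturality, Category.assoc,
    ← Category.assoc ((H.post (H.dual A') ⊗ₘ 𝟙 A) ⊗ₘ 𝟙 _), ← comp_tensor_id,
    show (H.post (A := A) (H.dual A') ⊗ₘ 𝟙 A) ≫ H.ev A (H.hom (H.hom A' (𝟙_ C)) (𝟙_ C)) =
      H.ev A A' ≫ H.dual A' from H.post_uncurry _,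
    comp_tensor_id, Category.assoc,
    show (H.dual A' ⊗ₘ 𝟙 (H.hom A' (𝟙_ C))) ≫ H.ev (H.hom A' (𝟙_ C)) (𝟙_ C) =
      (β_ A' (H.hom A' (𝟙_ C))).hom ≫ H.ev A' (𝟙_ C) from H.dual_uncurry A']

end HOPT

set_option maxHeartbeats 2000000 in
/-- in a deterministic HOPT with no correlations with single-state objects,
where `⊗` preserves equivalence of double duals and `A, A'` are causal with `d_A, d_{A'}`
isomorphisms, the object `A ⇒ A'` has no-signalling states. -/
theorem stmt10 {C : Type u} [Category.{v} C] [MonoidalCategory C] [SymmetricCategory C]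
    (H : HOPT C) (hdet : Deterministic C) (hnc : NoCorrelations C)
    (htens : ∀ A B : C, IsIso (H.dual A) → IsIso (H.dual B) → IsIso (H.dual (A ⊗ B)))
    (A A' : C) (hA : Causal A) (hA' : Causal A')
    (hdA : IsIso (H.dual A)) (hdA' : IsIso (H.dual A')) :
    HasNoSignallingStates (H.hom A A') := by
  obtain ⟨e', -, he'⟩ := id hA'
  intro X m
  obtain ⟨m', πx, hfact⟩ := hnc (H.hom A (𝟙_ C)) (H.single_state hA) X
    (m ≫ (H.curry (H.ev A A' ≫ e') ⊗ₘ 𝟙 X) ≫ (β_ (H.hom A (𝟙_ C)) X).hom)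
  refine ⟨m', fun P => ?_⟩
  have hφ : IsIso (H.staticCurry A (H.hom A' (𝟙_ C)) (𝟙_ C)) := H.isIso_staticCurry _ _ _
  have hc' : IsIso (H.post (A := A) (H.dual A')) := H.isIso_post _
  let θ : H.hom A A' ⟶ H.hom (A ⊗ H.hom A' (𝟙_ C)) (𝟙_ C) :=
    H.post (H.dual A') ≫ H.staticCurry A (H.hom A' (𝟙_ C)) (𝟙_ C)
  have hθ : IsIso θ := by dsimp only [θ]; exact IsIso.comp_isIso
  have hdZ : IsIso (H.dual (A ⊗ H.hom A' (𝟙_ C))) :=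
    htens _ _ hdA (H.isIso_dual_hom A' hdA')
  let Q : H.hom (A ⊗ H.hom A' (𝟙_ C)) (𝟙_ C) ⟶ 𝟙_ C := inv θ ≫ P
  let q : 𝟙_ C ⟶ H.hom (H.hom (A ⊗ H.hom A' (𝟙_ C)) (𝟙_ C)) (𝟙_ C) :=
    H.curry ((λ_ (H.hom (A ⊗ H.hom A' (𝟙_ C)) (𝟙_ C))).hom ≫ Q)
  obtain ⟨a, π0, hr⟩ := hnc (H.hom A' (𝟙_ C)) (H.single_state hA') A
    (q ≫ inv (H.dual (A ⊗ H.hom A' (𝟙_ C))))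
  have hq : q = (q ≫ inv (H.dual (A ⊗ H.hom A' (𝟙_ C)))) ≫ H.dual (A ⊗ H.hom A' (𝟙_ C)) := by
    simp
  rw [hr] at hq
  -- Step A : identify the effect P
  have hP : P = (ρ_ (H.hom A A')).inv ≫ (𝟙 (H.hom A A') ⊗ₘ a) ≫ H.ev A A' ≫ e' := by
    calc P = θ ≫ Q := by simp [Q]
    _ = θ ≫ (λ_ (H.hom (A ⊗ H.hom A' (𝟙_ C)) (𝟙_ C))).inv ≫
        (q ⊗ₘ 𝟙 (H.hom (A ⊗ H.hom A' (𝟙_ C)) (𝟙_ C))) ≫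
        H.ev (H.hom (A ⊗ H.hom A' (𝟙_ C)) (𝟙_ C)) (𝟙_ C) := by
      rw [show (q ⊗ₘ 𝟙 (H.hom (A ⊗ H.hom A' (𝟙_ C)) (𝟙_ C))) ≫
          H.ev (H.hom (A ⊗ H.hom A' (𝟙_ C)) (𝟙_ C)) (𝟙_ C) =
          (λ_ (H.hom (A ⊗ H.hom A' (𝟙_ C)) (𝟙_ C))).hom ≫ Q from H.curry_ev _]
      simp
    _ = θ ≫ (λ_ (H.hom (A ⊗ H.hom A' (𝟙_ C)) (𝟙_ C))).inv ≫
        (((λ_ (𝟙_ C)).inv ≫ (a ⊗ₘ π0)) ⊗ₘ 𝟙 (H.hom (A ⊗ H.hom A' (𝟙_ C)) (𝟙_ C))) ≫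
        (H.dual (A ⊗ H.hom A' (𝟙_ C)) ⊗ₘ 𝟙 (H.hom (A ⊗ H.hom A' (𝟙_ C)) (𝟙_ C))) ≫
        H.ev (H.hom (A ⊗ H.hom A' (𝟙_ C)) (𝟙_ C)) (𝟙_ C) := by
      rw [hq]
      simp only [comp_tensor_id, Category.assoc]
    _ = θ ≫ (λ_ (H.hom (A ⊗ H.hom A' (𝟙_ C)) (𝟙_ C))).inv ≫
        (((λ_ (𝟙_ C)).inv ≫ (a ⊗ₘ π0)) ⊗ₘ 𝟙 (H.hom (A ⊗ H.hom A' (𝟙_ C)) (𝟙_ C))) ≫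
        (β_ (A ⊗ H.hom A' (𝟙_ C)) (H.hom (A ⊗ H.hom A' (𝟙_ C)) (𝟙_ C))).hom ≫
        H.ev (A ⊗ H.hom A' (𝟙_ C)) (𝟙_ C) := by
      rw [show (H.dual (A ⊗ H.hom A' (𝟙_ C)) ⊗ₘ 𝟙 (H.hom (A ⊗ H.hom A' (𝟙_ C)) (𝟙_ C))) ≫
          H.ev (H.hom (A ⊗ H.hom A' (𝟙_ C)) (𝟙_ C)) (𝟙_ C) =
          (β_ (A ⊗ H.hom A' (𝟙_ C)) (H.hom (A ⊗ H.hom A' (𝟙_ C)) (𝟙_ C))).hom ≫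
          H.ev (A ⊗ H.hom A' (𝟙_ C)) (𝟙_ C) from H.dual_uncurry _]
    _ = (λ_ (H.hom A A')).inv ≫ (𝟙 (𝟙_ C) ⊗ₘ θ) ≫
        (((λ_ (𝟙_ C)).inv ≫ (a ⊗ₘ π0)) ⊗ₘ 𝟙 (H.hom (A ⊗ H.hom A' (𝟙_ C)) (𝟙_ C))) ≫
        (β_ (A ⊗ H.hom A' (𝟙_ C)) (H.hom (A ⊗ H.hom A' (𝟙_ C)) (𝟙_ C))).hom ≫
        H.ev (A ⊗ H.hom A' (𝟙_ C)) (𝟙_ C) := by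
      rw [← Category.assoc θ, leftUnitor_inv_naturality, ← id_tensorHom, Category.assoc]
    _ = (λ_ (H.hom A A')).inv ≫
        (((λ_ (𝟙_ C)).inv ≫ (a ⊗ₘ π0)) ⊗ₘ 𝟙 (H.hom A A')) ≫
        (𝟙 (A ⊗ H.hom A' (𝟙_ C)) ⊗ₘ θ) ≫
        (β_ (A ⊗ H.hom A' (𝟙_ C)) (H.hom (A ⊗ H.hom A' (𝟙_ C)) (𝟙_ C))).hom ≫
        H.ev (A ⊗ H.hom A' (𝟙_ C)) (𝟙_ C) := by
      rw [← Category.assoc (𝟙 (𝟙_ C) ⊗ₘ θ), id_tensor_comp_tensor_id,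
        ← tensor_id_comp_id_tensor, Category.assoc]
    _ = (λ_ (H.hom A A')).inv ≫
        (((λ_ (𝟙_ C)).inv ≫ (a ⊗ₘ π0)) ⊗ₘ 𝟙 (H.hom A A')) ≫
        (β_ (A ⊗ H.hom A' (𝟙_ C)) (H.hom A A')).hom ≫
        (θ ⊗ₘ 𝟙 (A ⊗ H.hom A' (𝟙_ C))) ≫ H.ev (A ⊗ H.hom A' (𝟙_ C)) (𝟙_ C) := by
      rw [← Category.assoc (𝟙 (A ⊗ H.hom A' (𝟙_ C)) ⊗ₘ θ),
        BraidedCategory.braiding_naturality (𝟙 (A ⊗ H.hom A' (𝟙_ C))) θ, Category.assoc]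
    _ = (λ_ (H.hom A A')).inv ≫
        (((λ_ (𝟙_ C)).inv ≫ (a ⊗ₘ π0)) ⊗ₘ 𝟙 (H.hom A A')) ≫
        (β_ (A ⊗ H.hom A' (𝟙_ C)) (H.hom A A')).hom ≫
        (α_ (H.hom A A') A (H.hom A' (𝟙_ C))).inv ≫
        (H.ev A A' ⊗ₘ 𝟙 (H.hom A' (𝟙_ C))) ≫ (β_ A' (H.hom A' (𝟙_ C))).hom ≫
        H.ev A' (𝟙_ C) := by
      rw [show (θ ⊗ₘ 𝟙 (A ⊗ H.hom A' (𝟙_ C))) ≫ H.ev (A ⊗ H.hom A' (𝟙_ C)) (𝟙_ C) =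
        (α_ (H.hom A A') A (H.hom A' (𝟙_ C))).inv ≫
        (H.ev A A' ⊗ₘ 𝟙 (H.hom A' (𝟙_ C))) ≫ (β_ A' (H.hom A' (𝟙_ C))).hom ≫
        H.ev A' (𝟙_ C) from H.theta_uncurry A A']
    _ = (λ_ (H.hom A A')).inv ≫ (β_ (𝟙_ C) (H.hom A A')).hom ≫
        (𝟙 (H.hom A A') ⊗ₘ ((λ_ (𝟙_ C)).inv ≫ (a ⊗ₘ π0))) ≫
        (α_ (H.hom A A') A (H.hom A' (𝟙_ C))).inv ≫
        (H.ev A A' ⊗ₘ 𝟙 (H.hom A' (𝟙_ C))) ≫ (β_ A' (H.hom A' (𝟙_ C))).hom ≫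
        H.ev A' (𝟙_ C) := by
      rw [← Category.assoc (((λ_ (𝟙_ C)).inv ≫ (a ⊗ₘ π0)) ⊗ₘ 𝟙 (H.hom A A')),
        BraidedCategory.braiding_naturality ((λ_ (𝟙_ C)).inv ≫ (a ⊗ₘ π0)) (𝟙 (H.hom A A')),
        Category.assoc]
    _ = (ρ_ (H.hom A A')).inv ≫
        (𝟙 (H.hom A A') ⊗ₘ ((λ_ (𝟙_ C)).inv ≫ (a ⊗ₘ π0))) ≫
        (α_ (H.hom A A') A (H.hom A' (𝟙_ C))).inv ≫
        (H.ev A A' ⊗ₘ 𝟙 (H.hom A' (𝟙_ C))) ≫ (β_ A' (H.hom A' (𝟙_ C))).hom ≫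
        H.ev A' (𝟙_ C) := by
      rw [← Category.assoc (λ_ (H.hom A A')).inv,
        show (λ_ (H.hom A A')).inv ≫ (β_ (𝟙_ C) (H.hom A A')).hom =
          (ρ_ (H.hom A A')).inv from by
          rw [← cancel_mono (ρ_ (H.hom A A')).hom]
          simp [braiding_rightUnitor]]
    _ = (ρ_ (H.hom A A')).inv ≫ (𝟙 (H.hom A A') ⊗ₘ (λ_ (𝟙_ C)).inv) ≫
        (𝟙 (H.hom A A') ⊗ₘ (a ⊗ₘ π0)) ≫
        (α_ (H.hom A A') A (H.hom A' (𝟙_ C))).inv ≫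
        (H.ev A A' ⊗ₘ 𝟙 (H.hom A' (𝟙_ C))) ≫ (β_ A' (H.hom A' (𝟙_ C))).hom ≫
        H.ev A' (𝟙_ C) := by
      rw [id_tensor_comp, Category.assoc]
    _ = (ρ_ (H.hom A A')).inv ≫ (𝟙 (H.hom A A') ⊗ₘ (λ_ (𝟙_ C)).inv) ≫
        (α_ (H.hom A A') (𝟙_ C) (𝟙_ C)).inv ≫
        ((𝟙 (H.hom A A') ⊗ₘ a) ⊗ₘ π0) ≫
        (H.ev A A' ⊗ₘ 𝟙 (H.hom A' (𝟙_ C))) ≫ (β_ A' (H.hom A' (𝟙_ C))).hom ≫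
        H.ev A' (𝟙_ C) := by
      rw [← Category.assoc (𝟙 (H.hom A A') ⊗ₘ (a ⊗ₘ π0)),
        associator_inv_naturality (𝟙 (H.hom A A')) a π0, Category.assoc]
    _ = (ρ_ (H.hom A A')).inv ≫ (𝟙 (H.hom A A') ⊗ₘ (λ_ (𝟙_ C)).inv) ≫
        (α_ (H.hom A A') (𝟙_ C) (𝟙_ C)).inv ≫
        ((((𝟙 (H.hom A A') ⊗ₘ a) ≫ H.ev A A') ⊗ₘ 𝟙 (𝟙_ C)) ≫ (𝟙 A' ⊗ₘ π0)) ≫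
        (β_ A' (H.hom A' (𝟙_ C))).hom ≫ H.ev A' (𝟙_ C) := by
      rw [← Category.assoc ((𝟙 (H.hom A A') ⊗ₘ a) ⊗ₘ π0), tensorHom_comp_tensorHom,
        tensor_id_comp_id_tensor, Category.comp_id, ← tensor_id_comp_id_tensor]
    _ = (ρ_ (H.hom A A')).inv ≫ (𝟙 (H.hom A A') ⊗ₘ (λ_ (𝟙_ C)).inv) ≫
        (α_ (H.hom A A') (𝟙_ C) (𝟙_ C)).inv ≫
        (((𝟙 (H.hom A A') ⊗ₘ a) ≫ H.ev A A') ⊗ₘ 𝟙 (𝟙_ C)) ≫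
        (β_ A' (𝟙_ C)).hom ≫ (π0 ⊗ₘ 𝟙 A') ≫ H.ev A' (𝟙_ C) := by
      rw [Category.assoc, ← Category.assoc (𝟙 A' ⊗ₘ π0),
        BraidedCategory.braiding_naturality (𝟙 A') π0, Category.assoc]
    _ = (ρ_ (H.hom A A')).inv ≫ (𝟙 (H.hom A A') ⊗ₘ (λ_ (𝟙_ C)).inv) ≫
        (α_ (H.hom A A') (𝟙_ C) (𝟙_ C)).inv ≫
        (((𝟙 (H.hom A A') ⊗ₘ a) ≫ H.ev A A') ⊗ₘ 𝟙 (𝟙_ C)) ≫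
        (ρ_ A').hom ≫ e' := by
      rw [H.state_uncurry hA' e' π0, ← Category.assoc (β_ A' (𝟙_ C)).hom,
        braiding_leftUnitor]
    _ = (ρ_ (H.hom A A')).inv ≫ (𝟙 (H.hom A A') ⊗ₘ (λ_ (𝟙_ C)).inv) ≫
        (α_ (H.hom A A') (𝟙_ C) (𝟙_ C)).inv ≫ (ρ_ (H.hom A A' ⊗ 𝟙_ C)).hom ≫
        (𝟙 (H.hom A A') ⊗ₘ a) ≫ H.ev A A' ≫ e' := by
      rw [tensorHom_id, ← Category.assoc (((𝟙 (H.hom A A') ⊗ₘ a) ≫ H.ev A A') ▷ (𝟙_ C)),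
        rightUnitor_naturality, Category.assoc, Category.assoc]
    _ = (ρ_ (H.hom A A')).inv ≫ (𝟙 (H.hom A A') ⊗ₘ a) ≫ H.ev A A' ≫ e' := by
      have hcoh : (ρ_ (H.hom A A')).inv ≫ (𝟙 (H.hom A A') ⊗ₘ (λ_ (𝟙_ C)).inv) ≫
          (α_ (H.hom A A') (𝟙_ C) (𝟙_ C)).inv ≫ (ρ_ (H.hom A A' ⊗ 𝟙_ C)).hom =
          (ρ_ (H.hom A A')).inv := by
        rw [id_tensorHom]
        coherence
      rw [reassoc_of% hcoh]
  -- Step B : rewrite the marginal through n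
  have hc : H.curry (H.ev A A' ≫ e') ≫ (ρ_ (H.hom A (𝟙_ C))).inv ≫
      (𝟙 (H.hom A (𝟙_ C)) ⊗ₘ a) ≫ H.ev A (𝟙_ C) =
      (ρ_ (H.hom A A')).inv ≫ (𝟙 (H.hom A A') ⊗ₘ a) ≫ H.ev A A' ≫ e' := by
    rw [← Category.assoc, rightUnitor_inv_naturality, ← tensorHom_id, Category.assoc]
    slice_lhs 2 3 => rw [tensor_id_comp_id_tensor, ← id_tensor_comp_tensor_id]
    simp only [Category.assoc]
    rw [show (H.curry (H.ev A A' ≫ e') ⊗ₘ 𝟙 A) ≫ H.ev A (𝟙_ C) = H.ev A A' ≫ e' from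
        H.curry_ev _]
  rw [hP, ← hc, comp_tensor_id, Category.assoc,
    show (((ρ_ (H.hom A (𝟙_ C))).inv ≫ (𝟙 (H.hom A (𝟙_ C)) ⊗ₘ a) ≫ H.ev A (𝟙_ C)) ⊗ₘ 𝟙 X) ≫
        (λ_ X).hom = (β_ (H.hom A (𝟙_ C)) X).hom ≫
        (𝟙 X ⊗ₘ ((ρ_ (H.hom A (𝟙_ C))).inv ≫ (𝟙 (H.hom A (𝟙_ C)) ⊗ₘ a) ≫ H.ev A (𝟙_ C))) ≫
        (ρ_ X).hom from by
      rw [← braiding_rightUnitor, ← Category.assoc, BraidedCategory.braiding_naturality,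
        Category.assoc],
    reassoc_of% hfact, ← Category.assoc (m' ⊗ₘ πx), tensorHom_comp_tensorHom, Category.comp_id,
    hdet (πx ≫ (ρ_ (H.hom A (𝟙_ C))).inv ≫ (𝟙 (H.hom A (𝟙_ C)) ⊗ₘ a) ≫ H.ev A (𝟙_ C)) (𝟙 _),
    tensorHom_id, rightUnitor_naturality, ← unitors_equal, Iso.inv_hom_id_assoc]
end

section
/- Let C be a symmetric monoidal category equipped with an insertion structure such that every insertion ε_{A,B} is completely injective and C has basic manipulations. Then the composition manipulations are associative: for all objects A, B, C, D, (comp_{A,B,C} ⊗ id_{C⇒D}) ≫ comp_{A,C,D} = α_{(A⇒B),(B⇒C),(C⇒D)} ≫ (id_{A⇒B} ⊗ comp_{B,C,D}) ≫ comp_{A,B,D}, where α is the associator. -/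
open CategoryTheory MonoidalCategory

universe v u

/-- the composition manipulations are associative. -/
theorem stmt16 {C : Type u} [Category.{v} C] [MonoidalCategory C] [SymmetricCategory C]
    (E : Insertion C) (hinj : E.CompletelyInjective) (bm : E.BasicManipulations) :
    ∀ A B D D' : C,
      (bm.comp A B D ⊗ₘ 𝟙 (E.hom D D')) ≫ bm.comp A D D'
        = (α_ (E.hom A B) (E.hom B D) (E.hom D D')).hom ≫
            (𝟙 (E.hom A B) ⊗ₘ bm.comp B D D') ≫ bm.comp A B D' := by
  intro A B D D'
  apply hinj
  dsimp only
  simp only [comp_tensor_id]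
  simp only [Category.assoc]
  rw [bm.comp_eval, bm.comp_eval]
  simp only [Insertion.doubleEval, MonoidalCategory.tensorHom_def]
  simp
  slice_rhs 4 5 => rw [← MonoidalCategory.whiskerLeft_comp, SymmetricCategory.symmetry]
  slice_lhs 3 4 => rw [← MonoidalCategory.whiskerLeft_comp, SymmetricCategory.symmetry]
  simp
  have ceval : ∀ X Y Z : C, bm.comp X Y Z ▷ X ≫ E.ins X Z = E.doubleEval X Y Z := by
    intro X Y Z
    rw [← MonoidalCategory.tensorHom_id]
    exact bm.comp_eval X Y Z
  -- LHS: move comp to hit ins A D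
  slice_lhs 1 2 => rw [← comp_whiskerRight, BraidedCategory.braiding_naturality_left,
    comp_whiskerRight]
  slice_lhs 2 3 => rw [associator_naturality_middle]
  slice_lhs 3 4 => rw [← MonoidalCategory.whiskerLeft_comp, ceval]
  -- RHS: move comp to hit ins B D'
  slice_rhs 3 4 => rw [associator_inv_naturality_middle]
  slice_rhs 4 5 => rw [← comp_whiskerRight, BraidedCategory.braiding_naturality_right,
    comp_whiskerRight]
  slice_rhs 5 6 => rw [associator_naturality_left]
  slice_rhs 6 7 => rw [← whisker_exchange]
  slice_rhs 7 8 => rw [ceval]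
  simp only [Insertion.doubleEval, MonoidalCategory.tensorHom_def]
  simp
  slice_lhs 9 10 => rw [← MonoidalCategory.whiskerLeft_comp, ← MonoidalCategory.whiskerLeft_comp,
    SymmetricCategory.symmetry]
  slice_rhs 7 8 => rw [← MonoidalCategory.whiskerLeft_comp, SymmetricCategory.symmetry]
  simp only [MonoidalCategory.whiskerLeft_id, Category.id_comp, Category.comp_id, Category.assoc]
  slice_rhs 6 7 => rw [associator_inv_naturality_right]
  slice_rhs 7 8 => rw [whisker_exchange]
  slice_rhs 8 9 => rw [associator_naturality_right]
  simp only [← Category.assoc]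
  congr 3
  simp only [Category.assoc]
  trans (β_ (E.hom A B ⊗ E.hom B D) (E.hom D D')).hom ▷ A ≫
      (E.hom D D' ◁ (β_ (E.hom A B) (E.hom B D)).hom) ▷ A ≫
      (α_ (E.hom D D') (E.hom B D ⊗ E.hom A B) A).hom ≫
      E.hom D D' ◁ (α_ (E.hom B D) (E.hom A B) A).hom
  · simp
  · slice_lhs 1 2 => rw [← comp_whiskerRight, ← BraidedCategory.braiding_naturality_left,
      comp_whiskerRight]
    simp
end

section
/- Let C be a symmetric monoidal category equipped with an insertion structure such that every insertion ε_{A,B} is completely injective and C has basic manipulations. Then the static identity is a two-sided unit for the composition manipulations: for all objects A, B, λ_{A⇒B}⁻¹ ≫ (îd_A ⊗ id_{A⇒B}) ≫ comp_{A,A,B} = id_{A⇒B} and ρ_{A⇒B}⁻¹ ≫ (id_{A⇒B} ⊗ îd_B) ≫ comp_{A,B,B} = id_{A⇒B}, where îd_A denotes the static version of the identity morphism on A and λ, ρ are the unitors. -/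
open CategoryTheory MonoidalCategory

universe v u

/-- the static identity is a two-sided unit for the composition manipulations. -/
theorem stmt17 {C : Type u} [Category.{v} C] [MonoidalCategory C] [SymmetricCategory C]
    (E : Insertion C) (hinj : E.CompletelyInjective) (bm : E.BasicManipulations) :
    ∀ A B : C,
      (λ_ (E.hom A B)).inv ≫ (E.static (𝟙 A) ⊗ₘ 𝟙 (E.hom A B)) ≫ bm.comp A A B
          = 𝟙 (E.hom A B) ∧
      (ρ_ (E.hom A B)).inv ≫ (𝟙 (E.hom A B) ⊗ₘ E.static (𝟙 B)) ≫ bm.comp A B B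
          = 𝟙 (E.hom A B) := by

  intro A B
  constructor
  · apply hinj
    simp only [comp_tensor_id, Category.assoc, bm.comp_eval, Insertion.doubleEval]
    rw [associator_naturality_assoc (E.static (𝟙 A)) (𝟙 _) (𝟙 _), tensorHom_comp_tensorHom_assoc]
    simp only [Category.comp_id, id_tensorHom_id, Category.id_comp]
    rw [show E.static (𝟙 A) ⊗ₘ (β_ (E.hom A B) A).hom
        = (𝟙 (𝟙_ C) ⊗ₘ (β_ (E.hom A B) A).hom) ≫ (E.static (𝟙 A) ⊗ₘ (𝟙 A ⊗ₘ 𝟙 (E.hom A B))) from by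
      rw [tensorHom_comp_tensorHom]; simp]
    rw [Category.assoc, associator_inv_naturality_assoc (E.static (𝟙 A)) (𝟙 A) (𝟙 (E.hom A B))]
    rw [← comp_tensor_id_assoc, E.static_ins]
    simp
  · apply hinj
    simp only [comp_tensor_id, Category.assoc, bm.comp_eval, Insertion.doubleEval]
    rw [associator_naturality_assoc (𝟙 (E.hom A B)) (E.static (𝟙 B)) (𝟙 A), tensorHom_comp_tensorHom_assoc]
    rw [BraidedCategory.braiding_naturality (E.static (𝟙 B)) (𝟙 A)]
    simp only [Category.comp_id, id_tensor_comp, Category.assoc]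
    rw [associator_inv_naturality_assoc (𝟙 (E.hom A B)) (𝟙 A) (E.static (𝟙 B)), tensorHom_comp_tensorHom_assoc]
    simp only [id_tensorHom_id, Category.id_comp, Category.comp_id]
    rw [show E.ins A B ⊗ₘ E.static (𝟙 B) = (E.ins A B ⊗ₘ 𝟙 (𝟙_ C)) ≫ (𝟙 B ⊗ₘ E.static (𝟙 B)) from by
      rw [tensorHom_comp_tensorHom]; simp]
    rw [Category.assoc, BraidedCategory.braiding_naturality_assoc (𝟙 B) (E.static (𝟙 B)), E.static_ins]
    simp
end

section
/- Let C be a symmetric monoidal category equipped with an insertion structure such that every insertion ε_{A,B} is completely injective and C has basic manipulations. For f : A' ⟶ A and g : B ⟶ B', define (f ⇒ g) : (A ⇒ B) ⟶ (A' ⇒ B') to be the morphism that pre-composes with the static f̂ and post-composes with the static ĝ via the composition manipulations, i.e. (f ⇒ g) = λ⁻¹ ≫ (f̂ ⊗ id_{A⇒B}) ≫ comp_{A',A,B} then ρ⁻¹ ≫ (id ⊗ ĝ) ≫ comp_{A',B,B'}. Then the assignment is bifunctorial: (id_A ⇒ id_B) = id_{A⇒B}, and for f' : A'' ⟶ A'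 and g' : B' ⟶ B'', (f ⇒ g) ≫ (f' ⇒ g') = ((f' ≫ f) ⇒ (g ≫ g')). In particular, if f and g are isomorphisms then f ⇒ g is an isomorphism. -/
open CategoryTheory MonoidalCategory

universe v u

namespace Insertion
variable {C : Type u} [Category.{v} C] [MonoidalCategory C] [SymmetricCategory C]

lemma pre_eval (E : Insertion C) (bm : E.BasicManipulations) {A A' B : C} (f : A' ⟶ A) :
    ((((λ_ (E.hom A B)).inv ≫ (E.static f ⊗ₘ 𝟙 (E.hom A B)) ≫ bm.comp A' A B) ⊗ₘ 𝟙 A') ≫ E.ins A' B)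
      = (𝟙 (E.hom A B) ⊗ₘ f) ≫ E.ins A B := by
  have hs := E.static_ins f
  simp only [comp_tensor_id, Category.assoc, bm.comp_eval, doubleEval]
  simp only [MonoidalCategory.tensorHom_def] at hs ⊢
  simp [whisker_exchange, reassoc_of% hs]
  slice_lhs 5 6 => rw [← MonoidalCategory.whiskerLeft_comp, SymmetricCategory.symmetry,
    MonoidalCategory.whiskerLeft_id]
  simp only [MonoidalCategory.whiskerLeft_id, Category.comp_id] at hs
  simp [whisker_exchange, reassoc_of% hs]
  slice_lhs 3 4 => rw [← comp_whiskerRight, BraidedCategory.braiding_naturality_left]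
  simp [reassoc_of% hs]
  slice_lhs 2 3 => rw [← MonoidalCategory.whiskerLeft_comp, hs]
  simp only [← MonoidalCategory.whiskerLeft_comp_assoc, Iso.inv_hom_id, MonoidalCategory.whiskerLeft_id]
  simp

lemma post_eval (E : Insertion C) (bm : E.BasicManipulations) {A B B' : C} (g : B ⟶ B') :
    ((((ρ_ (E.hom A B)).inv ≫ (𝟙 (E.hom A B) ⊗ₘ E.static g) ≫ bm.comp A B B') ⊗ₘ 𝟙 A) ≫ E.ins A B')
      = E.ins A B ≫ g := by
  have hs := E.static_ins g
  simp only [comp_tensor_id, Category.assoc, bm.comp_eval, doubleEval]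
  simp only [MonoidalCategory.tensorHom_def] at hs ⊢
  simp only [MonoidalCategory.whiskerLeft_id, Category.comp_id] at hs
  simp [whisker_exchange, reassoc_of% hs]
  slice_lhs 3 4 => rw [← MonoidalCategory.whiskerLeft_comp, SymmetricCategory.symmetry,
    MonoidalCategory.whiskerLeft_id]
  simp [whisker_exchange, reassoc_of% hs]
  slice_lhs 2 3 => rw [associator_inv_naturality_middle]
  slice_lhs 3 4 => rw [← comp_whiskerRight, BraidedCategory.braiding_naturality_right]
  simp [whisker_exchange, reassoc_of% hs]
  slice_lhs 3 4 => rw [associator_naturality_left]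
  slice_lhs 2 3 => rw [Iso.inv_hom_id]
  simp only [Category.id_comp, Category.comp_id, Category.assoc]
  slice_lhs 2 3 => rw [← whisker_exchange]
  slice_lhs 1 2 => rw [← leftUnitor_inv_naturality]
  simp only [Category.assoc]
  rw [hs, Iso.inv_hom_id_assoc]

end Insertion


/-- `f ⇒ g : (A ⇒ B) ⟶ (A' ⇒ B')`: pre-composition with the static `f̂` and post-composition
with the static `ĝ` via the composition manipulations. -/
def Insertion.homMap {C : Type u} [Category.{v} C] [MonoidalCategory C] [SymmetricCategory C]
    (E : Insertion C) (bm : E.BasicManipulations) {A A' B B' : C}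
    (f : A' ⟶ A) (g : B ⟶ B') : E.hom A B ⟶ E.hom A' B' :=
  ((λ_ (E.hom A B)).inv ≫ (E.static f ⊗ₘ 𝟙 (E.hom A B)) ≫ bm.comp A' A B) ≫
    ((ρ_ (E.hom A' B)).inv ≫ (𝟙 (E.hom A' B) ⊗ₘ E.static g) ≫ bm.comp A' B B')

/-- the assignment `(f, g) ↦ (f ⇒ g)` is bifunctorial; in particular it
preserves isomorphisms. -/
theorem stmt18 {C : Type u} [Category.{v} C] [MonoidalCategory C] [SymmetricCategory C]
    (E : Insertion C) (hinj : E.CompletelyInjective) (bm : E.BasicManipulations) :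
    (∀ A B : C, E.homMap bm (𝟙 A) (𝟙 B) = 𝟙 (E.hom A B)) ∧
    (∀ {A A' A'' B B' B'' : C} (f : A' ⟶ A) (g : B ⟶ B') (f' : A'' ⟶ A') (g' : B' ⟶ B''),
      E.homMap bm f g ≫ E.homMap bm f' g' = E.homMap bm (f' ≫ f) (g ≫ g')) ∧
    (∀ {A A' B B' : C} (f : A' ⟶ A) (g : B ⟶ B'),
      IsIso f → IsIso g → IsIso (E.homMap bm f g)) := by
  have heval : ∀ {A A' B B' : C} (f : A' ⟶ A) (g : B ⟶ B'),
      (E.homMap bm f g ⊗ₘ 𝟙 A') ≫ E.ins A' B' = (𝟙 (E.hom A B) ⊗ₘ f) ≫ E.ins A B ≫ g := by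
    intro A A' B B' f g
    rw [Insertion.homMap, comp_tensor_id, Category.assoc, E.post_eval bm g]
    rw [← Category.assoc, E.pre_eval bm f, Category.assoc]
  have hceval : ∀ {X A A' B B' : C} (h : X ⟶ E.hom A B) (f : A' ⟶ A) (g : B ⟶ B'),
      ((h ≫ E.homMap bm f g) ⊗ₘ 𝟙 A') ≫ E.ins A' B' = (h ⊗ₘ f) ≫ E.ins A B ≫ g := by
    intro X A A' B B' h f g
    rw [comp_tensor_id, Category.assoc, heval, ← Category.assoc, tensorHom_comp_tensorHom,
      Category.comp_id, Category.id_comp]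
  have hid : ∀ A B : C, E.homMap bm (𝟙 A) (𝟙 B) = 𝟙 (E.hom A B) := by
    intro A B
    apply hinj
    simp only [heval]
    simp
  have hcomp : ∀ {A A' A'' B B' B'' : C} (f : A' ⟶ A) (g : B ⟶ B') (f' : A'' ⟶ A')
      (g' : B' ⟶ B''),
      E.homMap bm f g ≫ E.homMap bm f' g' = E.homMap bm (f' ≫ f) (g ≫ g') := by
    intro A A' A'' B B' B'' f g f' g'
    apply hinj
    simp only [hceval, heval]
    rw [← id_tensor_comp_tensor_id f' (E.homMap bm f g)]
    slice_lhs 2 3 => rw [heval]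
    slice_lhs 1 2 => rw [tensorHom_comp_tensorHom]
    simp
  refine ⟨hid, fun f g f' g' => hcomp f g f' g', fun f g hf hg => ?_⟩
  exact ⟨E.homMap bm (inv f) (inv g), by rw [hcomp]; simp [hid], by rw [hcomp]; simp [hid]⟩
end

section
/- Let C be a HOPT in which the tensor product preserves equivalence of double duals, and let S be a class of objects of C such that d_A is an isomorphism for every A ∈ S. Let G(S) be the smallest class of objects containing S and closed under the operations X, Y ∈ G(S) ⟹ X ⊗ Y ∈ G(S) and X, Y ∈ G(S) ⟹ (X ⇒ Y) ∈ G(S). Then d_X is an isomorphism for every X ∈ G(S). In particular, if (C, C₁) is a tight HOPT (the objects of C are generated from those of C₁ by ⊗ and ⇒), d_A is an isomorphism for every object A of C₁, and ⊗ preserves equivalence of double duals, then d_X is an isomorphism for every object X of C, i.e. C is *-autonomous with dualising object I. -/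
open CategoryTheory MonoidalCategory

universe v u

/-- The smallest class of objects containing `S` and closed under `⊗` and `⇒`. -/
inductive GeneratedBy {C : Type u} [Category.{v} C] [MonoidalCategory C] [SymmetricCategory C]
    (H : HOPT C) (S : Set C) : C → Prop
  | base {A : C} : A ∈ S → GeneratedBy H S A
  | tensor {X Y : C} : GeneratedBy H S X → GeneratedBy H S Y → GeneratedBy H S (X ⊗ Y)
  | hom {X Y : C} : GeneratedBy H S X → GeneratedBy H S Y → GeneratedBy H S (H.hom X Y)

namespace HOPTAux
open HOPT
variable {C : Type u} [Category.{v} C] [MonoidalCategory C] [SymmetricCategory C] (H : HOPT C)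

lemma hom_ext {Z A B : C} {u v : Z ⟶ H.hom A B}
    (h : (u ⊗ₘ 𝟙 A) ≫ H.ev A B = (v ⊗ₘ 𝟙 A) ≫ H.ev A B) : u = v :=
  (H.curry_unique h).trans (H.curry_unique rfl).symm

def pre {A B : C} (f : A ⟶ B) (D : C) : H.hom B D ⟶ H.hom A D :=
  H.curry ((𝟙 _ ⊗ₘ f) ≫ H.ev B D)

lemma pre_uncurry {A B : C} (f : A ⟶ B) (D : C) :
    (pre H f D ⊗ₘ 𝟙 A) ≫ H.ev A D = (𝟙 _ ⊗ₘ f) ≫ H.ev B D :=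
  H.curry_ev _

lemma pre_id (A D : C) : pre H (𝟙 A) D = 𝟙 (H.hom A D) := by
  apply hom_ext; rw [pre_uncurry]

lemma pre_comp {A B E : C} (f : A ⟶ B) (g : B ⟶ E) (D : C) :
    pre H (f ≫ g) D = pre H g D ≫ pre H f D := by
  apply hom_ext
  conv_lhs => rw [pre_uncurry]
  conv_rhs => rw [comp_tensor_id, Category.assoc, pre_uncurry, ← Category.assoc,
    tensor_id_comp_id_tensor, ← id_tensor_comp_tensor_id, Category.assoc, pre_uncurry,
    ← Category.assoc, ← id_tensor_comp]

lemma pre_isIso {A B : C} (f : A ⟶ B) [IsIso f] (D : C) : IsIso (pre H f D) :=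
  ⟨pre H (CategoryTheory.inv f) D,
    by rw [← pre_comp, IsIso.inv_hom_id, pre_id],
    by rw [← pre_comp, IsIso.hom_inv_id, pre_id]⟩

def post (A : C) {B B' : C} (g : B ⟶ B') : H.hom A B ⟶ H.hom A B' :=
  H.curry (H.ev A B ≫ g)

lemma post_uncurry (A : C) {B B' : C} (g : B ⟶ B') :
    (post H A g ⊗ₘ 𝟙 A) ≫ H.ev A B' = H.ev A B ≫ g :=
  H.curry_ev _

lemma post_id (A B : C) : post H A (𝟙 B) = 𝟙 (H.hom A B) := by
  apply hom_ext; rw [post_uncurry]; simp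

lemma post_comp (A : C) {B B' B'' : C} (g : B ⟶ B') (g' : B' ⟶ B'') :
    post H A (g ≫ g') = post H A g ≫ post H A g' := by
  apply hom_ext
  conv_lhs => rw [post_uncurry]
  conv_rhs => rw [comp_tensor_id, Category.assoc, post_uncurry, ← Category.assoc,
    post_uncurry, Category.assoc]

lemma post_isIso (A : C) {B B' : C} (g : B ⟶ B') [IsIso g] : IsIso (post H A g) :=
  ⟨post H A (CategoryTheory.inv g),
    by rw [← post_comp, IsIso.hom_inv_id, post_id],
    by rw [← post_comp, IsIso.inv_hom_id, post_id]⟩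

end HOPTAux

namespace HOPTAux
open HOPT
variable {C : Type u} [Category.{v} C] [MonoidalCategory C] [SymmetricCategory C] (H : HOPT C)

lemma dual_uncurry (A : C) :
    (H.dual A ⊗ₘ 𝟙 (H.hom A (𝟙_ C))) ≫ H.ev (H.hom A (𝟙_ C)) (𝟙_ C) =
      (β_ A (H.hom A (𝟙_ C))).hom ≫ H.ev A (𝟙_ C) :=
  H.curry_ev _

lemma dual_natural {W V : C} (f : W ⟶ V) :
    H.dual W ≫ pre H (pre H f (𝟙_ C)) (𝟙_ C) = f ≫ H.dual V := by
  apply hom_ext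
  conv_lhs => rw [comp_tensor_id, Category.assoc, pre_uncurry, ← Category.assoc,
    tensor_id_comp_id_tensor, ← id_tensor_comp_tensor_id, Category.assoc, dual_uncurry,
    ← Category.assoc, BraidedCategory.braiding_naturality, Category.assoc, pre_uncurry]
  conv_rhs => rw [comp_tensor_id, Category.assoc, dual_uncurry, ← Category.assoc,
    BraidedCategory.braiding_naturality, Category.assoc]

lemma triple_dual (A : C) :
    H.dual (H.hom A (𝟙_ C)) ≫ pre H (H.dual A) (𝟙_ C) = 𝟙 (H.hom A (𝟙_ C)) := by
  apply hom_ext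
  conv_lhs => rw [comp_tensor_id, Category.assoc, pre_uncurry, ← Category.assoc,
    tensor_id_comp_id_tensor, ← id_tensor_comp_tensor_id, Category.assoc, dual_uncurry,
    ← Category.assoc, BraidedCategory.braiding_naturality, Category.assoc, dual_uncurry,
    ← Category.assoc, SymmetricCategory.symmetry]
  simp

lemma dual_of_dual_isIso (A : C) (h : IsIso (H.dual A)) :
    IsIso (H.dual (H.hom A (𝟙_ C))) := by
  haveI := h
  haveI : IsIso (pre H (H.dual A) (𝟙_ C)) := pre_isIso H _ _
  have hd : H.dual (H.hom A (𝟙_ C)) = CategoryTheory.inv (pre H (H.dual A) (𝟙_ C)) := by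
    rw [← Category.comp_id (H.dual (H.hom A (𝟙_ C))),
      ← IsIso.hom_inv_id (pre H (H.dual A) (𝟙_ C)), ← Category.assoc, triple_dual,
      Category.id_comp]
  rw [hd]
  infer_instance

lemma dual_isIso_of_iso {W V : C} (e : W ≅ V) (h : IsIso (H.dual V)) :
    IsIso (H.dual W) := by
  haveI := h
  haveI : IsIso (pre H e.hom (𝟙_ C)) := pre_isIso H _ _
  haveI : IsIso (pre H (pre H e.hom (𝟙_ C)) (𝟙_ C)) := pre_isIso H _ _
  have hw : H.dual W = e.hom ≫ H.dual V ≫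
      CategoryTheory.inv (pre H (pre H e.hom (𝟙_ C)) (𝟙_ C)) := by
    rw [← Category.assoc, ← dual_natural, Category.assoc, IsIso.hom_inv_id,
      Category.comp_id]
  rw [hw]
  infer_instance

def staticUncurry (X A B : C) : H.hom (X ⊗ A) B ⟶ H.hom X (H.hom A B) :=
  H.curry (H.curry ((α_ (H.hom (X ⊗ A) B) X A).hom ≫ H.ev (X ⊗ A) B))

lemma sc_fact (X A B : C) :
    (H.staticCurry X A B ⊗ₘ 𝟙 (X ⊗ A)) ≫ H.ev (X ⊗ A) B =
      (α_ (H.hom X (H.hom A B)) X A).inv ≫ (H.ev X (H.hom A B) ⊗ₘ 𝟙 A) ≫ H.ev A B :=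
  H.curry_ev _

lemma su_fact (X A B : C) :
    (staticUncurry H X A B ⊗ₘ 𝟙 X) ≫ H.ev X (H.hom A B) =
      H.curry ((α_ (H.hom (X ⊗ A) B) X A).hom ≫ H.ev (X ⊗ A) B) :=
  H.curry_ev _

lemma staticCurry_isIso (X A B : C) : IsIso (H.staticCurry X A B) := by
  refine ⟨staticUncurry H X A B, ?_, ?_⟩
  · apply hom_ext H (A := X)
    have h1 : ((H.staticCurry X A B ≫ staticUncurry H X A B) ⊗ₘ 𝟙 X) ≫ H.ev X (H.hom A B)
        = (H.staticCurry X A B ⊗ₘ 𝟙 X) ≫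
            H.curry ((α_ (H.hom (X ⊗ A) B) X A).hom ≫ H.ev (X ⊗ A) B) := by
      rw [comp_tensor_id, Category.assoc, su_fact]
    rw [h1, id_tensorHom_id, Category.id_comp]
    apply hom_ext H (A := A)
    rw [comp_tensor_id, Category.assoc, H.curry_ev, ← Category.assoc,
      associator_naturality, id_tensorHom_id, Category.assoc, sc_fact, ← Category.assoc,
      Iso.hom_inv_id, Category.id_comp]
  · apply hom_ext H (A := X ⊗ A)
    have h2 : (staticUncurry H X A B ⊗ₘ 𝟙 (X ⊗ A)) ≫ (α_ (H.hom X (H.hom A B)) X A).inv =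
        (α_ (H.hom (X ⊗ A) B) X A).inv ≫ ((staticUncurry H X A B ⊗ₘ 𝟙 X) ⊗ₘ 𝟙 A) := by
      rw [← id_tensorHom_id, associator_inv_naturality]
    rw [comp_tensor_id, Category.assoc, sc_fact, ← Category.assoc, h2, Category.assoc,
      ← Category.assoc ((staticUncurry H X A B ⊗ₘ 𝟙 X) ⊗ₘ 𝟙 A), ← comp_tensor_id, su_fact, H.curry_ev,
      ← Category.assoc, Iso.inv_hom_id, Category.id_comp, id_tensorHom_id, Category.id_comp]

end HOPTAux

namespace HOPTAux
open HOPT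
variable {C : Type u} [Category.{v} C] [MonoidalCategory C] [SymmetricCategory C] (H : HOPT C)

lemma dual_hom_isIso (X Y : C) (hX : IsIso (H.dual X)) (hY : IsIso (H.dual Y))
    (htens : ∀ A B : C, IsIso (H.dual A) → IsIso (H.dual B) → IsIso (H.dual (A ⊗ B))) :
    IsIso (H.dual (H.hom X Y)) := by
  haveI := hY
  haveI h1 : IsIso (post H X (H.dual Y)) := post_isIso H X _
  haveI h2 : IsIso (H.staticCurry X (H.hom Y (𝟙_ C)) (𝟙_ C)) := staticCurry_isIso H _ _ _
  have e : H.hom X Y ≅ H.hom (X ⊗ H.hom Y (𝟙_ C)) (𝟙_ C) :=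
    asIso (post H X (H.dual Y) ≫ H.staticCurry X (H.hom Y (𝟙_ C)) (𝟙_ C))
  exact dual_isIso_of_iso H e
    (dual_of_dual_isIso H _ (htens _ _ hX (dual_of_dual_isIso H _ hY)))

end HOPTAux

/-- if `⊗` preserves equivalence of double duals and `d_A` is an isomorphism for
every `A ∈ S`, then `d_X` is an isomorphism for every `X` generated from `S` by `⊗` and `⇒`;
in particular, in a tight HOPT where every object is so generated from objects with
invertible dualisers, every dualiser is invertible, i.e. the theory is `*`-autonomous with
dualising object `I`. -/
theorem stmt19 {C : Type u} [Category.{v} C] [MonoidalCategory C] [SymmetricCategory C]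
    (H : HOPT C)
    (htens : ∀ A B : C, IsIso (H.dual A) → IsIso (H.dual B) → IsIso (H.dual (A ⊗ B)))
    (S : Set C) (hS : ∀ A ∈ S, IsIso (H.dual A)) :
    (∀ X : C, GeneratedBy H S X → IsIso (H.dual X)) ∧
    ((∀ X : C, GeneratedBy H S X) → ∀ X : C, IsIso (H.dual X)) := by
  
  have main : ∀ X : C, GeneratedBy H S X → IsIso (H.dual X) := by
    intro X hX
    induction hX with
    | base h => exact hS _ h
    | tensor _ _ ihx ihy => exact htens _ _ ihx ihy
    | hom _ _ ihx ihy => exact HOPTAux.dual_hom_isIso H _ _ ihx ihy htens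
  exact ⟨main, fun hall X => main X (hall X)⟩
end
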